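/- arXiv:0808.0327 — 5 statements merged into one kernel-verified Lean document; each statement's English description precedes it below -/
import Mathlib

section
/- Let X be a real Hausdorff topological vector space with topological dual X*, let (ν_α)_{α∈A} be a net of Borel probability measures on X indexed by a directed set A, and let (t_α)_{α∈A} be a net of positive real numbers converging to 0. Assume (ν_α) is exponentially tight with respect to (t_α). Let E be the set of exposed points x of the Legendre–Fenchel transform L̄* for which there exists an exposing hyperplane λ_x ∈ X* such that the limit lim_α t_α log ∫_X exp(λ_x(y)/t_α) dν_α(y) exists in ℝ and such that L̄(c·λ_x) < +∞ for some c > 1. If inf_{x∈G} L̄*(x) = inf_{x∈G∩E} L̄*(x) for every open set G ⊆ X, then (ν_α) satisfies the large deviation principle with powers (t_α) and rate function L̄*. -/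
open MeasureTheory Filter Topology
open scoped ENNReal

/-- The large deviation functional `L̄(h) = limsup_α t_α log ∫ exp(h(x)/t_α) dν_α(x)`,
with values in the extended reals. -/
noncomputable def LDFunctional {X A : Type*} [MeasurableSpace X] [Preorder A]
    (ν : A → Measure X) (t : A → ℝ) (h : X → ℝ) : EReal :=
  Filter.limsup
    (fun α => (t α : EReal) *
      ENNReal.log (∫⁻ x, ENNReal.ofReal (Real.exp (h x / t α)) ∂(ν α))) Filter.atTop

/-- A net of Borel probability measures `ν` satisfies the large deviation principle with
powers `t` and rate function `I` : `I` is `[0,+∞]`-valued, lower semicontinuous, and the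
usual upper bound for closed sets and lower bound for open sets hold. -/
def HasLDP {X A : Type*} [TopologicalSpace X] [MeasurableSpace X] [Preorder A]
    (ν : A → Measure X) (t : A → ℝ) (I : X → EReal) : Prop :=
  (∀ x, 0 ≤ I x) ∧ LowerSemicontinuous I ∧
    (∀ F : Set X, IsClosed F →
      Filter.limsup (fun α => (t α : EReal) * ENNReal.log (ν α F)) Filter.atTop
        ≤ -(⨅ x ∈ F, I x)) ∧
    (∀ G : Set X, IsOpen G →
      -(⨅ x ∈ G, I x) ≤
        Filter.liminf (fun α => (t α : EReal) * ENNReal.log (ν α G)) Filter.atTop)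

/-! ### Auxiliary lemmas -/

lemma ereal_mul_add_pos {t : ℝ} (ht : 0 < t) (a b : EReal) :
    (t : EReal) * (a + b) = (t : EReal) * a + (t : EReal) * b := by
  induction a using EReal.rec <;> induction b using EReal.rec <;>
    simp_all [EReal.coe_mul_bot_of_pos ht, EReal.coe_mul_top_of_pos ht, ← EReal.coe_mul,
      ← EReal.coe_add, mul_add]

lemma ereal_mul_le_mul_left {t : ℝ} (ht : 0 < t) {a b : EReal} :
    (t : EReal) * a ≤ (t : EReal) * b ↔ a ≤ b := by
  induction a using EReal.rec <;> induction b using EReal.rec <;>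
    simp_all [EReal.coe_mul_bot_of_pos ht, EReal.coe_mul_top_of_pos ht, ← EReal.coe_mul,
      EReal.coe_le_coe_iff, mul_le_mul_iff_right₀ ht, le_of_lt ht]

lemma tlog_le_iff {t : ℝ} (ht : 0 < t) {w : ℝ≥0∞} {d : ℝ} :
    (t : EReal) * ENNReal.log w ≤ (d : EReal) ↔ w ≤ ENNReal.ofReal (Real.exp (d / t)) := by
  have h1 : (d : EReal) = (t : EReal) * ENNReal.log (ENNReal.ofReal (Real.exp (d / t))) := by
    rw [ENNReal.log_ofReal_of_pos (Real.exp_pos _), Real.log_exp, ← EReal.coe_mul,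
      mul_div_cancel₀ _ ht.ne']
  rw [h1, ereal_mul_le_mul_left ht, ENNReal.log_le_log_iff]

lemma tlog_lt_iff {t : ℝ} (ht : 0 < t) {w : ℝ≥0∞} {d : ℝ} :
    (t : EReal) * ENNReal.log w < (d : EReal) ↔ w < ENNReal.ofReal (Real.exp (d / t)) := by
  rw [← not_le, ← not_le, not_iff_not]
  have h1 : (d : EReal) = (t : EReal) * ENNReal.log (ENNReal.ofReal (Real.exp (d / t))) := by
    rw [ENNReal.log_ofReal_of_pos (Real.exp_pos _), Real.log_exp, ← EReal.coe_mul,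
      mul_div_cancel₀ _ ht.ne']
  rw [h1, ereal_mul_le_mul_left ht, ENNReal.log_le_log_iff]

lemma le_tlog_iff {t : ℝ} (ht : 0 < t) {w : ℝ≥0∞} {d : ℝ} :
    (d : EReal) ≤ (t : EReal) * ENNReal.log w ↔ ENNReal.ofReal (Real.exp (d / t)) ≤ w := by
  rw [← not_lt, ← not_lt, not_iff_not, tlog_lt_iff ht]

lemma ereal_le_of_forall_real_gt {w a : EReal} (h : ∀ d : ℝ, a < (d : EReal) → w ≤ (d : EReal)) :
    w ≤ a := by
  by_contra hc
  push_neg at hc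
  obtain ⟨d, hd1, hd2⟩ := EReal.exists_between_coe_real hc
  exact absurd (h d hd1) (not_le.2 hd2)

lemma ereal_lt_sub_comm {b y : ℝ} {L : EReal} (h : (b : EReal) < (y : EReal) - L) :
    L < ((y - b : ℝ) : EReal) := by
  induction L using EReal.rec with
  | bot => exact EReal.bot_lt_coe _
  | coe c =>
      rw [show ((y:EReal) - (c:EReal)) = ((y - c : ℝ) : EReal) from (EReal.coe_sub _ _).symm,
        EReal.coe_lt_coe_iff] at h
      rw [EReal.coe_lt_coe_iff]; linarith
  | top => simp [EReal.sub_top] at h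

lemma ereal_sub_pos_aux {r a y : ℝ} {L : EReal} (h : ((y - r : ℝ) : EReal) < (a : EReal) - L) :
    (0 : EReal) < ((a - y : ℝ) : EReal) - (((-r : ℝ) : EReal) + L) := by
  induction L using EReal.rec with
  | bot => simp [sub_eq_add_neg]
  | coe c =>
      rw [show ((a:EReal) - (c:EReal)) = ((a - c : ℝ) : EReal) from (EReal.coe_sub _ _).symm,
        EReal.coe_lt_coe_iff] at h
      rw [show ((-r : ℝ):EReal) + (c:EReal) = ((-r + c : ℝ) : EReal) from (EReal.coe_add _ _).symm,
        show (((a - y : ℝ)):EReal) - (((-r + c : ℝ)):EReal) = ((a - y - (-r + c) : ℝ) : EReal) from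
          (EReal.coe_sub _ _).symm,
        ← EReal.coe_zero, EReal.coe_lt_coe_iff]; linarith
  | top => simp [EReal.sub_top] at h

lemma ereal_le_of_forall_sub_delta {c : ℝ} {w : EReal}
    (h : ∀ δ : ℝ, 0 < δ → ((c - δ : ℝ) : EReal) ≤ w) : (c : EReal) ≤ w := by
  by_contra hc
  push_neg at hc
  obtain ⟨d, hd1, hd2⟩ := EReal.exists_between_coe_real hc
  have := h (c - d) (by exact_mod_cast sub_pos.2 (by exact_mod_cast hd2))
  simp only [sub_sub_cancel] at this
  exact absurd (this.trans_lt hd1) (lt_irrefl _)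

lemma baldi_lsc {X ι : Type*} [TopologicalSpace X] (g : ι → X → ℝ) (hg : ∀ i, Continuous (g i))
    (C : ι → EReal) : LowerSemicontinuous (fun y => ⨆ i, ((g i y : EReal) - C i)) := by
  apply lowerSemicontinuous_iSup
  intro i
  rcases eq_bot_or_bot_lt (C i) with hC | hC
  · have : (fun y => ((g i y : EReal) - C i)) = fun _ => (⊤ : EReal) := by
      funext y; rw [hC, EReal.coe_sub_bot]
    rw [this]; exact lowerSemicontinuous_const
  rcases eq_top_or_lt_top (C i) with hC' | hC'
  · have : (fun y => ((g i y : EReal) - C i)) = fun _ => (⊥ : EReal) := by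
      funext y; rw [hC', EReal.sub_top]
    rw [this]; exact lowerSemicontinuous_const
  · lift C i to ℝ using ⟨hC'.ne, hC.ne'⟩ with c hc
    have : (fun y => ((g i y : EReal) - (c : EReal))) = fun y => ((g i y - c : ℝ) : EReal) := by
      funext y; rw [EReal.coe_sub]
    rw [this]
    exact (continuous_coe_real_ereal.comp ((hg i).sub continuous_const)).lowerSemicontinuous

lemma baldi_pos_unif {X : Type*} [TopologicalSpace X] {K : Set X} (hK : IsCompact K)
    {J : X → EReal} (hJ : LowerSemicontinuous J) (h : ∀ y ∈ K, 0 < J y) :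
    ∃ η : ℝ, 0 < η ∧ ∀ y ∈ K, (η : EReal) < J y := by
  have hcov : K ⊆ ⋃ n : ℕ, J ⁻¹' Set.Ioi ((1 / (n + 1) : ℝ) : EReal) := by
    intro y hy
    rcases EReal.exists_between_coe_real (h y hy) with ⟨d, hd0, hd⟩
    have hd0' : (0 : ℝ) < d := by exact_mod_cast hd0
    obtain ⟨n, hn⟩ := exists_nat_one_div_lt hd0'
    exact Set.mem_iUnion.2 ⟨n, lt_trans (by exact_mod_cast hn) hd⟩
  obtain ⟨s, hs⟩ := hK.elim_finite_subcover _ (fun n => hJ.isOpen_preimage _) hcov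
  refine ⟨1 / ((s.sup id : ℕ) + 1), by positivity, fun y hy => ?_⟩
  obtain ⟨n, hns, hn⟩ := Set.mem_iUnion₂.1 (hs hy)
  refine lt_of_le_of_lt ?_ hn
  rw [EReal.coe_le_coe_iff]
  apply one_div_le_one_div_of_le (by positivity)
  have := Finset.le_sup (f := id) hns
  exact_mod_cast Nat.add_le_add_right this 1

section NetLemmas

variable {A : Type*} [Preorder A] [IsDirected A (· ≤ ·)] [Nonempty A]

lemma limsup_le_of_ev_le_tendsto {f : A → EReal} {g : A → ℝ} {d : ℝ}
    (h : ∀ᶠ α in atTop, f α ≤ ((g α : ℝ) : EReal)) (hg : Tendsto g atTop (𝓝 d)) :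
    Filter.limsup f atTop ≤ (d : EReal) := by
  haveI : (atTop : Filter A).NeBot := atTop_neBot_iff.mpr ⟨‹_›, ‹_›⟩
  exact (limsup_le_limsup h).trans_eq (EReal.tendsto_coe.2 hg).limsup_eq

end NetLemmas

lemma cheb_core {X : Type*} [MeasurableSpace X] (μ : Measure X) {f : X → ℝ} (hf : Measurable f)
    {m : ℝ} {S : Set X} (hSm : MeasurableSet S) (hS : ∀ y ∈ S, m ≤ f y) :
    ENNReal.ofReal (Real.exp m) * μ S ≤ ∫⁻ y, ENNReal.ofReal (Real.exp (f y)) ∂μ := by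
  calc ENNReal.ofReal (Real.exp m) * μ S = ∫⁻ _ in S, ENNReal.ofReal (Real.exp m) ∂μ := by
        rw [setLIntegral_const]
    _ ≤ ∫⁻ y in S, ENNReal.ofReal (Real.exp (f y)) ∂μ := by
        apply setLIntegral_mono ((Real.measurable_exp.comp hf).ennreal_ofReal)
        exact fun y hy => ENNReal.ofReal_le_ofReal (Real.exp_le_exp.2 (hS y hy))
    _ ≤ _ := setLIntegral_le_lintegral _ _

section MainLemmas

variable {X : Type*} [AddCommGroup X] [Module ℝ X] [TopologicalSpace X]
    [IsTopologicalAddGroup X] [ContinuousSMul ℝ X] [MeasurableSpace X] [OpensMeasurableSpace X]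
    {A : Type*} [Preorder A] [IsDirected A (· ≤ ·)] [Nonempty A]

omit [IsTopologicalAddGroup X] [ContinuousSMul ℝ X] in
lemma baldi_upper_compact (μ : A → Measure X) (t : A → ℝ) (htpos : ∀ α, 0 < t α)
    (htlim : Tendsto t atTop (𝓝 0)) {K : Set X} (hK : IsCompact K) (b : ℝ)
    (hb : ∀ x ∈ K, ∃ lam : X →L[ℝ] ℝ,
      Filter.limsup (fun α => (t α : EReal) *
        ENNReal.log (∫⁻ y, ENNReal.ofReal (Real.exp (lam y / t α)) ∂(μ α))) Filter.atTop
        < ((lam x - b : ℝ) : EReal)) :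
    Filter.limsup (fun α => (t α : EReal) * ENNReal.log (μ α K)) Filter.atTop
      ≤ ((-b : ℝ) : EReal) := by
  have key : ∀ x ∈ K, ∃ (lam : X →L[ℝ] ℝ) (q : ℝ),
      Filter.limsup (fun α => (t α : EReal) *
        ENNReal.log (∫⁻ y, ENNReal.ofReal (Real.exp (lam y / t α)) ∂(μ α))) Filter.atTop
        < (q : EReal) ∧ q < lam x - b := by
    intro x hx
    obtain ⟨lam, hlam⟩ := hb x hx
    obtain ⟨q, h1, h2⟩ := EReal.exists_between_coe_real hlam
    exact ⟨lam, q, h1, by exact_mod_cast h2⟩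
  choose! lam q hq1 hq2 using key
  set U : X → Set X := fun x => {y | b + q x < lam x y} with hU
  have hUopen : ∀ x, IsOpen (U x) := fun x => isOpen_lt continuous_const (lam x).continuous
  have hmem : ∀ x ∈ K, U x ∈ 𝓝 x := fun x hx =>
    (hUopen x).mem_nhds (by simpa [hU] using by linarith [hq2 x hx])
  obtain ⟨s, hsK, hcover⟩ := hK.elim_nhds_subcover U hmem
  have hU_ev : ∀ x ∈ s, ∀ᶠ α in atTop, μ α (U x) ≤ ENNReal.ofReal (Real.exp (-b / t α)) := by
    intro x hxs
    filter_upwards [eventually_lt_of_limsup_lt (hq1 x (hsK x hxs))] with α hα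
    have hWlt := (tlog_lt_iff (htpos α)).1 hα
    have hcheb := cheb_core (μ α) (f := fun y => lam x y / t α)
      (((lam x).continuous.measurable).div_const _)
      (m := (b + q x) / t α) (hUopen x).measurableSet
      (fun y hy => div_le_div_of_nonneg_right (le_of_lt hy) (htpos α).le)
    set a := ENNReal.ofReal (Real.exp ((b + q x) / t α)) with ha
    have ha0 : a ≠ 0 := by simp [ha, Real.exp_pos]
    have hatop : a ≠ ⊤ := ENNReal.ofReal_ne_top
    calc μ α (U x) = a⁻¹ * (a * μ α (U x)) := by
          rw [← mul_assoc, ENNReal.inv_mul_cancel ha0 hatop, one_mul]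
      _ ≤ a⁻¹ * ENNReal.ofReal (Real.exp (q x / t α)) :=
          mul_le_mul_right (hcheb.trans hWlt.le) _
      _ = ENNReal.ofReal (Real.exp (-b / t α)) := by
          rw [ha, ← ENNReal.ofReal_inv_of_pos (Real.exp_pos _), ← Real.exp_neg,
            ← ENNReal.ofReal_mul (Real.exp_pos _).le, ← Real.exp_add]
          congr 1
          congr 1; ring
  have hall : ∀ᶠ α in atTop, ∀ x ∈ s, μ α (U x) ≤ ENNReal.ofReal (Real.exp (-b / t α)) :=
    (Filter.eventually_all_finset s).2 hU_ev
  apply limsup_le_of_ev_le_tendsto (g := fun α => t α * Real.log (s.card + 1) - b)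
  · filter_upwards [hall] with α hα
    rw [tlog_le_iff (htpos α)]
    have hsum : μ α K ≤ ∑ x ∈ s, μ α (U x) :=
      (measure_mono hcover).trans (measure_biUnion_finset_le s U)
    have hsum2 : ∑ x ∈ s, μ α (U x) ≤ s.card • ENNReal.ofReal (Real.exp (-b / t α)) :=
      Finset.sum_le_card_nsmul s _ _ hα
    refine hsum.trans (hsum2.trans ?_)
    rw [nsmul_eq_mul, ← ENNReal.ofReal_natCast, ← ENNReal.ofReal_mul (Nat.cast_nonneg _)]
    apply ENNReal.ofReal_le_ofReal
    have h1 : ((s.card : ℝ)) ≤ Real.exp (Real.log (s.card + 1)) := by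
      rw [Real.exp_log (by positivity)]; linarith
    calc (s.card : ℝ) * Real.exp (-b / t α)
        ≤ Real.exp (Real.log (s.card + 1)) * Real.exp (-b / t α) :=
          mul_le_mul_of_nonneg_right h1 (Real.exp_pos _).le
      _ = Real.exp ((t α * Real.log (s.card + 1) - b) / t α) := by
          rw [← Real.exp_add]; congr 1
          rw [sub_div, mul_comm (t α), mul_div_assoc, div_self (htpos α).ne', mul_one,
            sub_eq_add_neg, neg_div]
  · have h := (htlim.mul_const (Real.log (s.card + 1))).sub_const b
    have he : (0:ℝ) * Real.log (s.card + 1) - b = -b := by ring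
    rwa [he] at h

omit [AddCommGroup X] [Module ℝ X] [TopologicalSpace X] [IsTopologicalAddGroup X]
  [ContinuousSMul ℝ X] [OpensMeasurableSpace X] in
lemma baldi_combine (μ : A → Measure X) (t : A → ℝ) (htpos : ∀ α, 0 < t α)
    (htlim : Tendsto t atTop (𝓝 0)) {S S₁ S₂ : Set X} (hS : S ⊆ S₁ ∪ S₂) {a : EReal}
    (h₁ : Filter.limsup (fun α => (t α : EReal) * ENNReal.log (μ α S₁)) Filter.atTop ≤ a)
    (h₂ : Filter.limsup (fun α => (t α : EReal) * ENNReal.log (μ α S₂)) Filter.atTop ≤ a) :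
    Filter.limsup (fun α => (t α : EReal) * ENNReal.log (μ α S)) Filter.atTop ≤ a := by
  apply ereal_le_of_forall_real_gt
  intro d hd
  have hev₁ := eventually_lt_of_limsup_lt (h₁.trans_lt hd)
  have hev₂ := eventually_lt_of_limsup_lt (h₂.trans_lt hd)
  apply limsup_le_of_ev_le_tendsto (g := fun α => t α * Real.log 2 + d)
  · filter_upwards [hev₁, hev₂] with α ha1 ha2
    rw [tlog_le_iff (htpos α)]
    have hb1 := ((tlog_lt_iff (htpos α)).1 ha1).le
    have hb2 := ((tlog_lt_iff (htpos α)).1 ha2).le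
    calc μ α S ≤ μ α S₁ + μ α S₂ := (measure_mono hS).trans (measure_union_le _ _)
      _ ≤ ENNReal.ofReal (Real.exp (d / t α)) + ENNReal.ofReal (Real.exp (d / t α)) :=
          add_le_add hb1 hb2
      _ ≤ ENNReal.ofReal (Real.exp ((t α * Real.log 2 + d) / t α)) := by
          rw [← ENNReal.ofReal_add (Real.exp_pos _).le (Real.exp_pos _).le]
          apply ENNReal.ofReal_le_ofReal
          have hq : (t α * Real.log 2 + d) / t α = Real.log 2 + d / t α := by
            rw [add_div, mul_comm (t α), mul_div_assoc, div_self (htpos α).ne', mul_one]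
          rw [hq, Real.exp_add, Real.exp_log (by norm_num)]
          linarith [Real.exp_pos (d / t α)]
  · have h := (htlim.mul_const (Real.log 2)).add_const d
    have he : (0:ℝ) * Real.log 2 + d = d := by ring
    rwa [he] at h

end MainLemmas

lemma exp_arith1 {t r lx δ L : ℝ} (ht : t ≠ 0) :
    (r - lx - δ + t * L) / t = -(lx + δ/2) / t + ((r - δ/2) / t + L) := by
  field_simp
  ring

section Tilted

variable {X : Type*} [AddCommGroup X] [Module ℝ X] [TopologicalSpace X]
    [IsTopologicalAddGroup X] [ContinuousSMul ℝ X] [T2Space X]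
    [MeasurableSpace X] [BorelSpace X]
    {A : Type*} [Preorder A] [IsDirected A (· ≤ ·)] [Nonempty A]

/-- Normalization constants of the tilted measures. -/
noncomputable def tZ (ν : A → Measure X) (t : A → ℝ) (l : X →L[ℝ] ℝ) : A → ℝ≥0∞ :=
  fun α => ∫⁻ y, ENNReal.ofReal (Real.exp (l y / t α)) ∂(ν α)

open scoped Classical in
/-- The tilted measures. -/
noncomputable def tMeas (ν : A → Measure X) (t : A → ℝ) (l : X →L[ℝ] ℝ) : A → Measure X :=
  fun α => if tZ ν t l α ≠ ⊤ then
    (tZ ν t l α)⁻¹ • ((ν α).withDensity (fun y => ENNReal.ofReal (Real.exp (l y / t α))))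
  else ν α

variable (ν : A → Measure X) (t : A → ℝ) (l : X →L[ℝ] ℝ)

lemma tgl_meas (α : A) : Measurable (fun y => ENNReal.ofReal (Real.exp (l y / t α))) :=
  (Real.measurable_exp.comp ((l.continuous.measurable).div_const _)).ennreal_ofReal

lemma tZ_pos (hprob : ∀ α, IsProbabilityMeasure (ν α)) (α : A) : 0 < tZ ν t l α := by
  haveI := hprob α
  rw [tZ, lintegral_pos_iff_support (tgl_meas t l α)]
  have hsupp : (Function.support fun y => ENNReal.ofReal (Real.exp (l y / t α))) =
      Set.univ := by
    ext y
    simp [Function.support, ENNReal.ofReal_eq_zero, not_le.2 (Real.exp_pos _)]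
  rw [hsupp, measure_univ]
  norm_num

lemma tMeas_apply {α : A} (hα : tZ ν t l α ≠ ⊤) {S : Set X} (hS : MeasurableSet S) :
    tMeas ν t l α S = (tZ ν t l α)⁻¹ * ∫⁻ y in S, ENNReal.ofReal (Real.exp (l y / t α)) ∂(ν α) := by
  simp only [tMeas, if_pos hα, Measure.smul_apply, smul_eq_mul, withDensity_apply _ hS]

lemma tMeas_prob (hprob : ∀ α, IsProbabilityMeasure (ν α)) {α : A} (hα : tZ ν t l α ≠ ⊤) :
    IsProbabilityMeasure (tMeas ν t l α) := by
  constructor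
  rw [tMeas_apply ν t l hα MeasurableSet.univ, Measure.restrict_univ]
  exact ENNReal.inv_mul_cancel (tZ_pos ν t l hprob α).ne' hα

lemma tMeas_int {α : A} (hα : tZ ν t l α ≠ ⊤) (f : X → ℝ≥0∞) (hf : Measurable f) :
    ∫⁻ y, f y ∂(tMeas ν t l α) =
      (tZ ν t l α)⁻¹ * ∫⁻ y, ENNReal.ofReal (Real.exp (l y / t α)) * f y ∂(ν α) := by
  simp only [tMeas, if_pos hα]
  rw [lintegral_smul_measure, lintegral_withDensity_eq_lintegral_mul _ (tgl_meas t l α) hf]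
  rfl

variable {r : ℝ}

lemma tZ_good (htpos : ∀ α, 0 < t α)
    (hr : Tendsto (fun α => (t α : EReal) * ENNReal.log (tZ ν t l α)) atTop (𝓝 (r : EReal))) :
    ∀ᶠ α in atTop, tZ ν t l α ≠ ⊤ := by
  have hev := hr.eventually (eventually_lt_nhds (show (r : EReal) < ((r + 1 : ℝ) : EReal)
    by exact_mod_cast lt_add_one r))
  filter_upwards [hev] with α hα hZt
  rw [hZt] at hα
  simp [ENNReal.log_top, EReal.coe_mul_top_of_pos (htpos α)] at hα

lemma tilted_LDF_le [Nonempty A] (htpos : ∀ α, 0 < t α)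
    (hr : Tendsto (fun α => (t α : EReal) * ENNReal.log (tZ ν t l α)) atTop (𝓝 (r : EReal)))
    (lam : X →L[ℝ] ℝ) :
    Filter.limsup (fun α => (t α : EReal) *
      ENNReal.log (∫⁻ y, ENNReal.ofReal (Real.exp (lam y / t α)) ∂(tMeas ν t l α)))
      Filter.atTop ≤ ((-r : ℝ) : EReal) +
      Filter.limsup (fun α => (t α : EReal) *
        ENNReal.log (∫⁻ y, ENNReal.ofReal (Real.exp ((lam y + l y) / t α)) ∂(ν α)))
        Filter.atTop := by
  haveI : (atTop : Filter A).NeBot := atTop_neBot_iff.mpr ⟨‹_›, ‹_›⟩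
  set u : A → EReal := fun α => -((t α : EReal) * ENNReal.log (tZ ν t l α)) with hudef
  set v : A → EReal := fun α => (t α : EReal) *
    ENNReal.log (∫⁻ y, ENNReal.ofReal (Real.exp ((lam y + l y) / t α)) ∂(ν α)) with hvdef
  have hu : Filter.limsup u atTop = ((-r : ℝ) : EReal) := by
    rw [hudef]
    rw [show (fun α => -((t α : EReal) * ENNReal.log (tZ ν t l α))) =
      -(fun α => (t α : EReal) * ENNReal.log (tZ ν t l α)) from rfl]
    rw [EReal.limsup_neg, hr.liminf_eq, ← EReal.coe_neg]
  have hev : ∀ᶠ α in atTop, (t α : EReal) *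
      ENNReal.log (∫⁻ y, ENNReal.ofReal (Real.exp (lam y / t α)) ∂(tMeas ν t l α)) =
      u α + v α := by
    filter_upwards [tZ_good ν t l htpos hr] with α hα
    have hmf : Measurable fun y => ENNReal.ofReal (Real.exp (lam y / t α)) :=
      (Real.measurable_exp.comp ((lam.continuous.measurable).div_const _)).ennreal_ofReal
    rw [tMeas_int ν t l hα _ hmf]
    have hieq : ∫⁻ y, ENNReal.ofReal (Real.exp (l y / t α)) *
        ENNReal.ofReal (Real.exp (lam y / t α)) ∂(ν α) =
        ∫⁻ y, ENNReal.ofReal (Real.exp ((lam y + l y) / t α)) ∂(ν α) := by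
      apply lintegral_congr
      intro y
      rw [← ENNReal.ofReal_mul (Real.exp_pos _).le, ← Real.exp_add,
        ← add_div, add_comm (l y)]
    rw [hieq, ENNReal.log_mul_add, ENNReal.log_inv, ereal_mul_add_pos (htpos α),
      show (t α : EReal) * (-(ENNReal.log (tZ ν t l α))) =
        -((t α : EReal) * ENNReal.log (tZ ν t l α)) by
          rw [EReal.mul_comm, EReal.neg_mul, EReal.mul_comm]]
  calc Filter.limsup (fun α => (t α : EReal) *
        ENNReal.log (∫⁻ y, ENNReal.ofReal (Real.exp (lam y / t α)) ∂(tMeas ν t l α))) atTop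
      = Filter.limsup (u + v) atTop := limsup_congr hev
    _ ≤ Filter.limsup u atTop + Filter.limsup v atTop :=
        EReal.limsup_add_le (Or.inl (by rw [hu]; exact EReal.coe_ne_bot _))
          (Or.inl (by rw [hu]; exact EReal.coe_ne_top _))
    _ = _ := by rw [hu]

lemma tilted_tight (hprob : ∀ α, IsProbabilityMeasure (ν α)) (htpos : ∀ α, 0 < t α)
    (htight : ∀ M : ℝ, ∃ K : Set X, IsCompact K ∧
      Filter.limsup (fun α => (t α : EReal) * ENNReal.log (ν α Kᶜ)) Filter.atTop
        < (M : EReal))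
    (hr : Tendsto (fun α => (t α : EReal) * ENNReal.log (tZ ν t l α)) atTop (𝓝 (r : EReal)))
    {c : ℝ} (hc1 : 1 < c)
    {m : ℝ} (hm : Filter.limsup (fun α => (t α : EReal) *
      ENNReal.log (∫⁻ y, ENNReal.ofReal (Real.exp ((c * l y) / t α)) ∂(ν α)))
      Filter.atTop < (m : EReal))
    (M : ℝ) :
    ∃ K : Set X, IsCompact K ∧
      Filter.limsup (fun α => (t α : EReal) * ENNReal.log (tMeas ν t l α Kᶜ)) Filter.atTop
        < (M : EReal) := by
  haveI : (atTop : Filter A).NeBot := atTop_neBot_iff.mpr ⟨‹_›, ‹_›⟩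
  have hc0 : (0:ℝ) < c := lt_trans one_pos hc1
  obtain ⟨q, hqdef⟩ : ∃ q : ℝ, q = c / (c - 1) := ⟨_, rfl⟩
  have hpq : Real.HolderConjugate c q := hqdef ▸ Real.HolderConjugate.conjExponent hc1
  have hq0 : 0 < q := hpq.symm.pos
  obtain ⟨M₀, hM₀⟩ : ∃ M₀ : ℝ, M₀ = q * (M - 1 + r - m / c) - 1 := ⟨_, rfl⟩
  obtain ⟨K, hKcomp, hKb⟩ := htight M₀
  have hKm : MeasurableSet (Kᶜ : Set X) := (hKcomp.isClosed.measurableSet).compl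
  refine ⟨K, hKcomp, ?_⟩
  obtain ⟨d, hd⟩ : ∃ d : ℝ, d = 1 - r + m / c + M₀ / q := ⟨_, rfl⟩
  have hdM : d < M := by
    have hq1 : M₀ / q = (M - 1 + r - m / c) - 1 / q := by
      rw [hM₀, sub_div, mul_comm q, mul_div_assoc, div_self hq0.ne', mul_one]
    have hq2 : 0 < 1 / q := by positivity
    rw [hd, hq1]; linarith
  have hevW := eventually_lt_of_limsup_lt hm
  have hevK := eventually_lt_of_limsup_lt hKb
  have hevZ : ∀ᶠ α in atTop, ENNReal.ofReal (Real.exp ((r - 1) / t α)) ≤ tZ ν t l α := by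
    have hev := hr.eventually (eventually_gt_nhds
      (show ((r - 1 : ℝ) : EReal) < (r : EReal) by exact_mod_cast sub_one_lt r))
    filter_upwards [hev] with α hα
    exact (le_tlog_iff (htpos α)).1 hα.le
  refine lt_of_le_of_lt ?_ (show (d : EReal) < (M : EReal) by exact_mod_cast hdM)
  apply limsup_le_of_ev_le_tendsto (g := fun _ => d) _ tendsto_const_nhds
  filter_upwards [tZ_good ν t l htpos hr, hevW, hevK, hevZ] with α hαg hαW hαK hαZ
  rw [tlog_le_iff (htpos α)]
  have hWm : (∫⁻ y, ENNReal.ofReal (Real.exp ((c * l y) / t α)) ∂(ν α)) ≤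
      ENNReal.ofReal (Real.exp (m / t α)) := ((tlog_lt_iff (htpos α)).1 hαW).le
  have hKM : ν α Kᶜ ≤ ENNReal.ofReal (Real.exp (M₀ / t α)) :=
    ((tlog_lt_iff (htpos α)).1 hαK).le
  have hind : Measurable ((Kᶜ : Set X).indicator (1 : X → ℝ≥0∞)) :=
    measurable_one.indicator hKm
  have hH := ENNReal.lintegral_mul_le_Lp_mul_Lq (ν α) hpq (tgl_meas t l α).aemeasurable
    hind.aemeasurable
  have hieq : ∫⁻ y in Kᶜ, ENNReal.ofReal (Real.exp (l y / t α)) ∂(ν α) =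
      ∫⁻ y, ((fun y => ENNReal.ofReal (Real.exp (l y / t α))) *
        (Kᶜ : Set X).indicator (1 : X → ℝ≥0∞)) y ∂(ν α) := by
    rw [← lintegral_indicator hKm]
    apply lintegral_congr
    intro y
    by_cases hy : y ∈ (Kᶜ : Set X) <;> simp [hy]
  have hfp : (∫⁻ y, (ENNReal.ofReal (Real.exp (l y / t α))) ^ c ∂(ν α)) =
      ∫⁻ y, ENNReal.ofReal (Real.exp ((c * l y) / t α)) ∂(ν α) := by
    apply lintegral_congr
    intro y
    rw [ENNReal.ofReal_rpow_of_pos (Real.exp_pos _), ← Real.exp_mul]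
    congr 2
    ring
  have hgq : (∫⁻ y, ((Kᶜ : Set X).indicator (1 : X → ℝ≥0∞) y) ^ q ∂(ν α)) = ν α Kᶜ := by
    rw [← lintegral_indicator_one hKm]
    apply lintegral_congr
    intro y
    by_cases hy : y ∈ (Kᶜ : Set X) <;>
      simp [hy, ENNReal.one_rpow, ENNReal.zero_rpow_of_pos hq0]
  have h1 : tMeas ν t l α Kᶜ ≤ (ENNReal.ofReal (Real.exp ((r - 1) / t α)))⁻¹ *
      ((ENNReal.ofReal (Real.exp (m / t α))) ^ (1/c) *
        (ENNReal.ofReal (Real.exp (M₀ / t α))) ^ (1/q)) := by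
    rw [tMeas_apply ν t l hαg hKm]
    apply mul_le_mul' (ENNReal.inv_le_inv' hαZ)
    calc ∫⁻ y in Kᶜ, ENNReal.ofReal (Real.exp (l y / t α)) ∂(ν α)
        ≤ (∫⁻ y, (ENNReal.ofReal (Real.exp (l y / t α))) ^ c ∂(ν α)) ^ (1/c) *
          (∫⁻ y, ((Kᶜ : Set X).indicator (1 : X → ℝ≥0∞) y) ^ q ∂(ν α)) ^ (1/q) := by
          rw [hieq]; exact hH
      _ ≤ _ := by
          rw [hfp, hgq]
          exact mul_le_mul' (ENNReal.rpow_le_rpow hWm (by positivity))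
            (ENNReal.rpow_le_rpow hKM (by positivity))
  refine h1.trans (le_of_eq ?_)
  rw [← ENNReal.ofReal_inv_of_pos (Real.exp_pos _), ← Real.exp_neg,
    ENNReal.ofReal_rpow_of_pos (Real.exp_pos _), ← Real.exp_mul,
    ENNReal.ofReal_rpow_of_pos (Real.exp_pos _), ← Real.exp_mul,
    ← ENNReal.ofReal_mul (Real.exp_pos _).le, ← Real.exp_add,
    ← ENNReal.ofReal_mul (Real.exp_pos _).le, ← Real.exp_add]
  congr 1
  rw [hd]
  ring

end Tilted
section Lower

variable {X : Type*} [AddCommGroup X] [Module ℝ X] [TopologicalSpace X]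
    [IsTopologicalAddGroup X] [ContinuousSMul ℝ X] [T2Space X]
    [MeasurableSpace X] [BorelSpace X]
    {A : Type*} [Preorder A] [IsDirected A (· ≤ ·)] [Nonempty A]

set_option maxHeartbeats 1000000 in
lemma baldi_lower_pointwise
    (ν : A → Measure X) (hprob : ∀ α, IsProbabilityMeasure (ν α))
    (t : A → ℝ) (htpos : ∀ α, 0 < t α) (htlim : Tendsto t atTop (𝓝 0))
    (htight : ∀ M : ℝ, ∃ K : Set X, IsCompact K ∧
      Filter.limsup (fun α => (t α : EReal) * ENNReal.log (ν α Kᶜ)) Filter.atTop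
        < (M : EReal))
    (Lstar : X → EReal)
    (hLstar : ∀ x, Lstar x = ⨆ l : X →L[ℝ] ℝ, ((l x : EReal) - LDFunctional ν t l))
    (hpos : ∀ x, 0 ≤ Lstar x)
    {G : Set X} (hG : IsOpen G) {x : X} (hxG : x ∈ G)
    (l : X →L[ℝ] ℝ)
    (hlexp : ∀ y, y ≠ x → (l y : EReal) - Lstar y < (l x : EReal) - Lstar x)
    {r : ℝ}
    (hr0 : Tendsto (fun α => (t α : EReal) *
      ENNReal.log (∫⁻ y, ENNReal.ofReal (Real.exp (l y / t α)) ∂(ν α))) atTop (𝓝 (r : EReal)))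
    {c : ℝ} (hc1 : 1 < c)
    {m : ℝ} (hm : Filter.limsup (fun α => (t α : EReal) *
      ENNReal.log (∫⁻ y, ENNReal.ofReal (Real.exp ((c * l y) / t α)) ∂(ν α)))
      Filter.atTop < (m : EReal)) :
    -Lstar x ≤ Filter.liminf (fun α => (t α : EReal) * ENNReal.log (ν α G)) Filter.atTop := by
  haveI : (atTop : Filter A).NeBot := atTop_neBot_iff.mpr ⟨‹_›, ‹_›⟩
  have hr : Tendsto (fun α => (t α : EReal) * ENNReal.log (tZ ν t l α)) atTop (𝓝 (r : EReal)) := by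
    unfold tZ; exact hr0
  have hLl : LDFunctional ν t ⇑l = (r : EReal) := by
    unfold LDFunctional; exact hr0.limsup_eq
  have hLx_ge : ((l x - r : ℝ) : EReal) ≤ Lstar x := by
    rw [hLstar]
    refine le_trans ?_ (le_iSup _ l)
    rw [hLl, EReal.coe_sub]
  -- reduce to a bound for each δ > 0
  refine le_trans (show -Lstar x ≤ ((r - l x : ℝ) : EReal) by
    rw [EReal.neg_le, ← EReal.coe_neg]
    refine le_trans (le_of_eq ?_) hLx_ge
    norm_num) ?_
  apply ereal_le_of_forall_sub_delta
  intro δ hδ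
  have hδ' : 0 < δ / 2 := by positivity
  set U : Set X := G ∩ {y | l y < l x + δ / 2} with hUdef
  have hUopen : IsOpen U := hG.inter (isOpen_lt l.continuous continuous_const)
  have hxU : x ∈ U := ⟨hxG, by simp [hUdef]; linarith⟩
  obtain ⟨K', hK'c, hK'b⟩ := tilted_tight ν t l hprob htpos htight hr hc1 hm (-1)
  set Cs : Set X := K' ∩ Uᶜ with hCsdef
  have hCcomp : IsCompact Cs := hK'c.inter_right hUopen.isClosed_compl
  -- positivity of the tilted rate function on Cs
  set D : (X →L[ℝ] ℝ) → EReal := fun lam => ((-r : ℝ) : EReal) +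
    Filter.limsup (fun α => (t α : EReal) *
      ENNReal.log (∫⁻ y, ENNReal.ofReal (Real.exp ((lam y + l y) / t α)) ∂(ν α)))
      Filter.atTop with hDdef
  set J : X → EReal := fun y => ⨆ lam : X →L[ℝ] ℝ, ((lam y : EReal) - D lam) with hJdef
  have hJlsc : LowerSemicontinuous J :=
    baldi_lsc (fun lam : X →L[ℝ] ℝ => (lam : X → ℝ)) (fun lam => lam.continuous) D
  have hJpos : ∀ y ∈ Cs, 0 < J y := by
    intro y hy
    have hyx : y ≠ x := by
      intro h
      exact hy.2 (h ▸ hxU)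
    have hxne_top : Lstar x ≠ ⊤ := by
      intro h
      have := hlexp y hyx
      rw [h, EReal.sub_top] at this
      exact absurd this (not_lt_bot)
    have hxne_bot : Lstar x ≠ ⊥ := ne_bot_of_le_ne_bot (by simp) (hpos x)
    have hsx : Lstar x = (((Lstar x).toReal : ℝ) : EReal) :=
      (EReal.coe_toReal hxne_top hxne_bot).symm
    set sx : ℝ := (Lstar x).toReal with hsxdef
    have hsxge : l x - r ≤ sx := by
      have h2 := hLx_ge
      rw [hsx] at h2
      exact_mod_cast h2
    have hkey : ((l y - r : ℝ) : EReal) < Lstar y := by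
      rcases eq_top_or_lt_top (Lstar y) with hyt | hyt
      · rw [hyt]; exact EReal.coe_lt_top _
      · have hybot : Lstar y ≠ ⊥ := ne_bot_of_le_ne_bot (by simp) (hpos y)
        have hsy : Lstar y = (((Lstar y).toReal : ℝ) : EReal) :=
          (EReal.coe_toReal hyt.ne hybot).symm
        set sy : ℝ := (Lstar y).toReal with hsydef
        have hexpy := hlexp y hyx
        rw [hsy, hsx] at hexpy
        rw [show ((l y : ℝ) : EReal) - (sy : EReal) = ((l y - sy : ℝ) : EReal) from
          (EReal.coe_sub _ _).symm, show ((l x : ℝ) : EReal) - (sx : EReal) =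
          ((l x - sx : ℝ) : EReal) from (EReal.coe_sub _ _).symm,
          EReal.coe_lt_coe_iff] at hexpy
        rw [hsy, EReal.coe_lt_coe_iff]
        linarith
    rw [hLstar y] at hkey
    obtain ⟨lam0, hlam0⟩ := lt_iSup_iff.1 hkey
    have hfun : (fun α => (t α : EReal) * ENNReal.log (∫⁻ z, ENNReal.ofReal
        (Real.exp (((lam0 - l) z + l z) / t α)) ∂(ν α))) =
        (fun α => (t α : EReal) * ENNReal.log (∫⁻ z, ENNReal.ofReal
          (Real.exp (lam0 z / t α)) ∂(ν α))) := by
      funext α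
      have hpt : ∀ z : X, (lam0 - l) z + l z = lam0 z := by
        intro z; simp [ContinuousLinearMap.sub_apply]
      have : (∫⁻ z, ENNReal.ofReal (Real.exp (((lam0 - l) z + l z) / t α)) ∂(ν α)) =
          ∫⁻ z, ENNReal.ofReal (Real.exp (lam0 z / t α)) ∂(ν α) :=
        lintegral_congr fun z => by rw [hpt z]
      rw [this]
    have hD : D (lam0 - l) = ((-r : ℝ) : EReal) + LDFunctional ν t ⇑lam0 := by
      rw [hDdef]
      unfold LDFunctional
      exact congrArg (fun w => ((-r : ℝ) : EReal) + w)
        (congrArg (fun f => Filter.limsup f Filter.atTop) hfun)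
    refine lt_of_lt_of_le ?_ (le_iSup
      (fun lam : X →L[ℝ] ℝ => ((lam y : EReal) - D lam)) (lam0 - l))
    rw [hD, ContinuousLinearMap.sub_apply]
    exact ereal_sub_pos_aux hlam0
  obtain ⟨η₀, hη₀, hJη⟩ := baldi_pos_unif hCcomp hJlsc hJpos
  set η : ℝ := min η₀ 1 with hηdef
  have hηpos : 0 < η := lt_min hη₀ one_pos
  have hCub : Filter.limsup (fun α => (t α : EReal) * ENNReal.log (tMeas ν t l α Cs))
      Filter.atTop ≤ ((-η₀ : ℝ) : EReal) := by
    apply baldi_upper_compact (tMeas ν t l) t htpos htlim hCcomp η₀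
    intro y hy
    have hJy := hJη y hy
    rw [hJdef] at hJy
    obtain ⟨lam, hlam⟩ := lt_iSup_iff.1 hJy
    exact ⟨lam, (tilted_LDF_le ν t l htpos hr lam).trans_lt (ereal_lt_sub_comm hlam)⟩
  have hUc : Filter.limsup (fun α => (t α : EReal) * ENNReal.log (tMeas ν t l α Uᶜ))
      Filter.atTop ≤ ((-η : ℝ) : EReal) := by
    apply baldi_combine (tMeas ν t l) t htpos htlim
      (show (Uᶜ : Set X) ⊆ Cs ∪ K'ᶜ from fun y hy => by
        by_cases h : y ∈ K'
        · exact Or.inl ⟨h, hy⟩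
        · exact Or.inr h)
    · exact hCub.trans (by exact_mod_cast neg_le_neg (min_le_left η₀ 1))
    · exact hK'b.le.trans (by exact_mod_cast neg_le_neg (min_le_right η₀ 1))
  have hμU : ∀ᶠ α in atTop, (2⁻¹ : ℝ≥0∞) ≤ tMeas ν t l α U := by
    have hh1 : ((-η : ℝ) : EReal) < ((-η/2 : ℝ) : EReal) := by
      exact_mod_cast (by linarith : -η < -η/2)
    have h1 := eventually_lt_of_limsup_lt (hUc.trans_lt hh1)
    have hl2 : (0:ℝ) < Real.log 2 := Real.log_pos (by norm_num)
    have h2 : ∀ᶠ α in atTop, t α < η / (2 * Real.log 2) :=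
      htlim.eventually (eventually_lt_nhds (by positivity))
    filter_upwards [h1, h2, tZ_good ν t l htpos hr] with α hα1 hα2 hαg
    have hμUc : tMeas ν t l α Uᶜ < ENNReal.ofReal (Real.exp ((-η/2) / t α)) :=
      (tlog_lt_iff (htpos α)).1 hα1
    have hexpb : Real.exp ((-η/2) / t α) ≤ 1/2 := by
      rw [show (1/2 : ℝ) = Real.exp (Real.log (1/2)) from (Real.exp_log (by norm_num)).symm]
      apply Real.exp_le_exp.2
      rw [show Real.log (1/2) = -Real.log 2 by rw [one_div, Real.log_inv]]
      rw [div_le_iff₀ (htpos α)]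
      have hmul : t α * Real.log 2 < η / 2 := by
        calc t α * Real.log 2 < (η / (2 * Real.log 2)) * Real.log 2 :=
              mul_lt_mul_of_pos_right hα2 hl2
          _ = η / 2 := by field_simp
      nlinarith [htpos α]
    have hUcb : tMeas ν t l α Uᶜ ≤ 2⁻¹ := by
      refine hμUc.le.trans ?_
      rw [show (2⁻¹ : ℝ≥0∞) = ENNReal.ofReal (1/2) by
        rw [one_div, ENNReal.ofReal_inv_of_pos (by norm_num : (0:ℝ) < 2)]
        norm_num]
      exact ENNReal.ofReal_le_ofReal hexpb
    haveI := tMeas_prob ν t l hprob hαg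
    have huniv : (1 : ℝ≥0∞) ≤ tMeas ν t l α U + tMeas ν t l α Uᶜ := by
      rw [← measure_univ (μ := tMeas ν t l α), ← Set.union_compl_self U]
      exact measure_union_le _ _
    have h12 : (2⁻¹ : ℝ≥0∞) = 1 - 2⁻¹ := by
      rw [← ENNReal.inv_two_add_inv_two, ENNReal.add_sub_cancel_right (by norm_num)]
    rw [h12, tsub_le_iff_right]
    exact huniv.trans (add_le_add_right hUcb _)
  have hZlow : ∀ᶠ α in atTop, ENNReal.ofReal (Real.exp ((r - δ/2) / t α)) ≤ tZ ν t l α := by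
    have hev := hr.eventually (eventually_gt_nhds
      (show ((r - δ/2 : ℝ) : EReal) < (r : EReal) by exact_mod_cast (by linarith)))
    filter_upwards [hev] with α hα
    exact (le_tlog_iff (htpos α)).1 hα.le
  have hmain : ∀ᶠ α in atTop,
      (((r - l x - δ + t α * Real.log (1/2) : ℝ)) : EReal) ≤
        (t α : EReal) * ENNReal.log (ν α G) := by
    filter_upwards [tZ_good ν t l htpos hr, hZlow, hμU] with α hαg hαZ hαU
    rw [le_tlog_iff (htpos α)]
    have harg : (r - l x - δ + t α * Real.log (1/2)) / t α =
        -(l x + δ/2) / t α + ((r - δ/2) / t α + Real.log (1/2)) :=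
      exp_arith1 (htpos α).ne'
    have step1 : ENNReal.ofReal (Real.exp ((r - l x - δ + t α * Real.log (1/2)) / t α)) =
        ENNReal.ofReal (Real.exp (-(l x + δ/2) / t α)) *
          (ENNReal.ofReal (Real.exp ((r - δ/2) / t α)) * ENNReal.ofReal (1/2)) := by
      rw [harg, Real.exp_add, Real.exp_add,
        ENNReal.ofReal_mul (Real.exp_pos _).le, ENNReal.ofReal_mul (Real.exp_pos _).le,
        show Real.exp (Real.log (1/2)) = 1/2 from Real.exp_log (by norm_num)]
    rw [step1]
    have step2 : ENNReal.ofReal (Real.exp ((r - δ/2) / t α)) * ENNReal.ofReal (1/2) ≤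
        tZ ν t l α * tMeas ν t l α U := by
      apply mul_le_mul' hαZ
      refine le_trans (le_of_eq ?_) hαU
      rw [one_div, ENNReal.ofReal_inv_of_pos (by norm_num : (0:ℝ) < 2)]
      norm_num
    refine le_trans (mul_le_mul_right step2 _) ?_
    have step3 : tZ ν t l α * tMeas ν t l α U =
        ∫⁻ y in U, ENNReal.ofReal (Real.exp (l y / t α)) ∂(ν α) := by
      rw [tMeas_apply ν t l hαg hUopen.measurableSet, ← mul_assoc,
        ENNReal.mul_inv_cancel (tZ_pos ν t l hprob α).ne' hαg, one_mul]
    rw [step3]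
    have step4 : ENNReal.ofReal (Real.exp (-(l x + δ/2) / t α)) *
        ∫⁻ y in U, ENNReal.ofReal (Real.exp (l y / t α)) ∂(ν α) ≤ ν α U := by
      have hle : ∫⁻ y in U, ENNReal.ofReal (Real.exp (l y / t α)) ∂(ν α) ≤
          ENNReal.ofReal (Real.exp ((l x + δ/2) / t α)) * ν α U := by
        calc ∫⁻ y in U, ENNReal.ofReal (Real.exp (l y / t α)) ∂(ν α)
            ≤ ∫⁻ _ in U, ENNReal.ofReal (Real.exp ((l x + δ/2) / t α)) ∂(ν α) := by
              apply setLIntegral_mono measurable_const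
              intro y hy
              apply ENNReal.ofReal_le_ofReal
              apply Real.exp_le_exp.2
              exact div_le_div_of_nonneg_right (le_of_lt hy.2) (htpos α).le
          _ = ENNReal.ofReal (Real.exp ((l x + δ/2) / t α)) * ν α U := setLIntegral_const _ _
      refine le_trans (mul_le_mul_right hle _) ?_
      rw [← mul_assoc, ← ENNReal.ofReal_mul (Real.exp_pos _).le, ← Real.exp_add,
        ← add_div, neg_add_cancel, zero_div, Real.exp_zero, ENNReal.ofReal_one,
        one_mul]
    exact step4.trans (measure_mono Set.inter_subset_left)
  have htends : Tendsto (fun α => r - l x - δ + t α * Real.log (1/2)) atTop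
      (𝓝 (r - l x - δ)) := by
    have h := (htlim.mul_const (Real.log (1/2))).const_add (r - l x - δ)
    simpa using h
  calc ((r - l x - δ : ℝ) : EReal)
      = Filter.liminf (fun α =>
          (((r - l x - δ + t α * Real.log (1/2) : ℝ)) : EReal)) atTop :=
        ((EReal.tendsto_coe.2 htends).liminf_eq).symm
    _ ≤ Filter.liminf (fun α => (t α : EReal) * ENNReal.log (ν α G)) atTop :=
        liminf_le_liminf hmain

end Lower
set_option maxHeartbeats 1000000 in
/-- **Baldi's theorem.** Let `X` be a real Hausdorff topological vector space, `ν` a net of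
Borel probability measures on `X` indexed by a directed set `A`, and `t` a net of positive
reals converging to `0`, such that `ν` is exponentially tight with respect to `t`.
Let `Lstar` be the Legendre–Fenchel transform of the restriction of the large deviation
functional to the topological dual, and let `E` be the set of exposed points `x` of `Lstar`
admitting an exposing hyperplane `l` such that `lim_α t_α log ∫ exp(l(y)/t_α) dν_α(y)`
exists in `ℝ` and `L̄(c·l) < +∞` for some `c > 1`.  If `inf_G Lstar = inf_{G ∩ E} Lstar`
for every open `G ⊆ X`, then `ν` satisfies the large deviation principle with powers `t`
and rate function `Lstar`. -/
theorem baldi_theorem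
    {X : Type*} [AddCommGroup X] [Module ℝ X] [TopologicalSpace X]
    [IsTopologicalAddGroup X] [ContinuousSMul ℝ X] [T2Space X]
    [MeasurableSpace X] [BorelSpace X]
    {A : Type*} [Preorder A] [IsDirected A (· ≤ ·)] [Nonempty A]
    (ν : A → Measure X) (hprob : ∀ α, IsProbabilityMeasure (ν α))
    (t : A → ℝ) (htpos : ∀ α, 0 < t α) (htlim : Tendsto t atTop (𝓝 0))
    (htight : ∀ M : ℝ, ∃ K : Set X, IsCompact K ∧
      Filter.limsup (fun α => (t α : EReal) * ENNReal.log (ν α Kᶜ)) Filter.atTop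
        < (M : EReal))
    (Lstar : X → EReal)
    (hLstar : ∀ x, Lstar x = ⨆ l : X →L[ℝ] ℝ, ((l x : EReal) - LDFunctional ν t l))
    (E : Set X)
    (hE : ∀ x, x ∈ E ↔ ∃ l : X →L[ℝ] ℝ,
      (∀ y, y ≠ x → (l y : EReal) - Lstar y < (l x : EReal) - Lstar x) ∧
      (∃ r : ℝ, Tendsto
        (fun α => (t α : EReal) *
          ENNReal.log (∫⁻ y, ENNReal.ofReal (Real.exp (l y / t α)) ∂(ν α)))
        atTop (𝓝 (r : EReal))) ∧
      (∃ c : ℝ, 1 < c ∧ LDFunctional ν t (fun y => c * l y) < ⊤))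
    (hinf : ∀ G : Set X, IsOpen G → (⨅ x ∈ G, Lstar x) = ⨅ x ∈ G ∩ E, Lstar x) :
    HasLDP ν t Lstar := by
  haveI : (atTop : Filter A).NeBot := atTop_neBot_iff.mpr ⟨‹_›, ‹_›⟩
  -- nonnegativity
  have hpos : ∀ x, 0 ≤ Lstar x := by
    intro x
    rw [hLstar]
    refine le_trans ?_ (le_iSup _ (0 : X →L[ℝ] ℝ))
    have h0 : LDFunctional ν t ⇑(0 : X →L[ℝ] ℝ) = 0 := by
      unfold LDFunctional
      have heq2 : (fun α => (t α : EReal) * ENNReal.log (∫⁻ y, ENNReal.ofReal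
          (Real.exp ((0 : X →L[ℝ] ℝ) y / t α)) ∂(ν α))) = fun _ => (0 : EReal) := by
        funext α
        haveI := hprob α
        have heq : (∫⁻ y, ENNReal.ofReal
            (Real.exp ((0 : X →L[ℝ] ℝ) y / t α)) ∂(ν α)) = 1 := by
          simp [lintegral_one]
        rw [heq]
        simp
      rw [heq2, limsup_const]
    rw [h0]
    simp
  refine ⟨hpos, ?_, ?_, ?_⟩
  · -- lower semicontinuity
    have heq : Lstar = fun y => ⨆ lam : X →L[ℝ] ℝ,
        (((fun lam' : X →L[ℝ] ℝ => (lam' : X → ℝ)) lam y : EReal) -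
          (fun lam' : X →L[ℝ] ℝ => LDFunctional ν t lam') lam) := funext hLstar
    rw [heq]
    exact baldi_lsc _ (fun lam => lam.continuous) _
  · -- upper bound for closed sets
    intro F hF
    apply ereal_le_of_forall_real_gt
    intro d hd
    rw [EReal.neg_lt_comm, ← EReal.coe_neg] at hd
    obtain ⟨K, hK, hKb⟩ := htight d
    have hFK : IsCompact (F ∩ K) := hK.inter_left hF
    have h₁ : Filter.limsup (fun α => (t α : EReal) * ENNReal.log (ν α (F ∩ K)))
        Filter.atTop ≤ ((d : ℝ) : EReal) := by
      have hcomp := baldi_upper_compact ν t htpos htlim hFK (-d) (fun y hy => by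
        have hyb : ((-d : ℝ) : EReal) < Lstar y := hd.trans_le (iInf₂_le y hy.1)
        rw [hLstar y] at hyb
        obtain ⟨lam, hlam⟩ := lt_iSup_iff.1 hyb
        exact ⟨lam, ereal_lt_sub_comm hlam⟩)
      rwa [neg_neg] at hcomp
    exact baldi_combine ν t htpos htlim
      (show F ⊆ (F ∩ K) ∪ Kᶜ from fun y hy => by
        by_cases h : y ∈ K
        · exact Or.inl ⟨hy, h⟩
        · exact Or.inr h) h₁ hKb.le
  · -- lower bound for open sets
    intro G hG
    rw [hinf G hG, EReal.neg_le]
    refine le_iInf₂ fun x hx => ?_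
    rw [← EReal.neg_le]
    obtain ⟨l, hlexp, ⟨r, hr⟩, ⟨c, hc1, hcfin⟩⟩ := (hE x).1 hx.2
    obtain ⟨m, hm0⟩ : ∃ m : ℝ, LDFunctional ν t (fun y => c * l y) < (m : EReal) := by
      obtain ⟨m, h1, _⟩ := EReal.exists_between_coe_real hcfin
      exact ⟨m, h1⟩
    have hm : Filter.limsup (fun α => (t α : EReal) *
        ENNReal.log (∫⁻ y, ENNReal.ofReal (Real.exp ((c * l y) / t α)) ∂(ν α)))
        Filter.atTop < (m : EReal) := by
      unfold LDFunctional at hm0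
      exact hm0
    exact baldi_lower_pointwise ν hprob t htpos htlim htight Lstar hLstar hpos hG hx.1
      l hlexp hr hc1 hm
end

section
/- Let Ω be a compact metric space, let C(Ω) be the Banach space of real-valued continuous functions on Ω with the supremum norm, and let P(Ω) be the space of Borel probability measures on Ω with the weak* topology. Let (ν_α)_{α∈A} be a net of Borel probability measures on P(Ω) and (t_α)_{α∈A} a net of positive reals converging to 0. Let Q : C(Ω) → ℝ be convex and continuous for the supremum norm, and suppose there is a dense subset C ⊆ C(Ω) such that for every g ∈ C, limsup_α t_α log ∫_{P(Ω)} exp(μ(g)/t_α) dν_α(μ) ≤ Q(g). Then for every closed set F ⊆ P(Ω), limsup_α t_α log ν_α(F) ≤ −inf_{μ∈F} Q*(μ), where Q*(μ) = sup_{g∈C(Ω)} (μ(g) − Q(g)). -/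
open MeasureTheory Filter Topology TopologicalSpace
open scoped NNReal
open scoped ENNReal

section Aux

variable {Ω : Type*} [MetricSpace Ω] [CompactSpace Ω] [MeasurableSpace Ω] [BorelSpace Ω]

/-- Evaluation of a probability measure against a continuous map is continuous. -/
theorem continuous_eval_pm (g : C(Ω, ℝ)) :
    Continuous (fun μ' : ProbabilityMeasure Ω => ∫ x, g x ∂(μ' : Measure Ω)) := by
  have h := ProbabilityMeasure.continuous_integral_boundedContinuousFunction
    (X := Ω) (BoundedContinuousFunction.mkOfCompact g)
  simpa using h

theorem integrable_cm (g : C(Ω, ℝ)) (μ : Measure Ω) [IsProbabilityMeasure μ] :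
    Integrable (fun x => g x) μ := by
  have := (BoundedContinuousFunction.mkOfCompact g).integrable μ
  exact this

theorem abs_integral_le (g : C(Ω, ℝ)) (μ : Measure Ω) [IsProbabilityMeasure μ] :
    |∫ x, g x ∂μ| ≤ ‖g‖ := by
  rw [← Real.norm_eq_abs]
  calc ‖∫ x, g x ∂μ‖ ≤ ∫ x, ‖g x‖ ∂μ := norm_integral_le_integral_norm _
    _ ≤ ∫ _x, ‖g‖ ∂μ := by
        refine integral_mono ((integrable_cm g μ).norm) (integrable_const _) ?_
        intro x
        exact g.norm_coe_le_norm x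
    _ = ‖g‖ := by simp

theorem integral_diff_le (g h : C(Ω, ℝ)) (μ : Measure Ω) [IsProbabilityMeasure μ] :
    |∫ x, g x ∂μ - ∫ x, h x ∂μ| ≤ dist g h := by
  have : ∫ x, g x ∂μ - ∫ x, h x ∂μ = ∫ x, (g - h) x ∂μ := by
    rw [← integral_sub (integrable_cm g μ) (integrable_cm h μ)]
    simp
  rw [this, dist_eq_norm]
  exact abs_integral_le (g - h) μ

/-- **Riesz–Markov–Kakutani** for compact metric spaces: a positive normalized linear
functional on `C(Ω, ℝ)` is represented by a Borel probability measure. -/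
theorem exists_repr_measure (ℓ : C(Ω, ℝ) → ℝ)
    (hadd : ∀ f g, ℓ (f + g) = ℓ f + ℓ g)
    (hsmul : ∀ (c : ℝ) (f), ℓ (c • f) = c * ℓ f)
    (hpos : ∀ f, (∀ x, (0 : ℝ) ≤ f x) → 0 ≤ ℓ f)
    (hone : ℓ 1 = 1) :
    ∃ μ : Measure Ω, IsProbabilityMeasure μ ∧ ∀ g : C(Ω, ℝ), ∫ x, g x ∂μ = ℓ g := by
  have hzero : ℓ 0 = 0 := by
    have := hsmul 0 0
    simpa using this
  have hmono : ∀ f g : C(Ω, ℝ), (∀ x, f x ≤ g x) → ℓ f ≤ ℓ g := by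
    intro f g h
    have h1 : ℓ g = ℓ f + ℓ (g - f) := by
      rw [← hadd]
      congr 1
      ext x
      simp
    have h2 : 0 ≤ ℓ (g - f) := hpos _ (fun x => by simpa using sub_nonneg.mpr (h x))
    linarith
  -- the "Riesz content" data
  set cS : Set Ω → Set C(Ω, ℝ) :=
    fun K => {f | (∀ x, 0 ≤ f x) ∧ ∀ x ∈ K, 1 ≤ f x} with hcS_def
  set lam : Set Ω → ℝ := fun K => sInf (ℓ '' cS K) with hlam_def
  have hone_mem : ∀ K, (1 : C(Ω, ℝ)) ∈ cS K :=
    fun K => ⟨fun x => by simp, fun x _ => by simp⟩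
  have hbdd : ∀ K, BddBelow (ℓ '' cS K) := by
    intro K
    refine ⟨0, ?_⟩
    rintro r ⟨f, hf, rfl⟩
    exact hpos f hf.1
  have hne : ∀ K, (ℓ '' cS K).Nonempty := fun K => ⟨ℓ 1, 1, hone_mem K, rfl⟩
  have hlam_le : ∀ K (f : C(Ω, ℝ)), f ∈ cS K → lam K ≤ ℓ f :=
    fun K f hf => csInf_le (hbdd K) ⟨f, hf, rfl⟩
  have hle_lam : ∀ K (c : ℝ), (∀ f ∈ cS K, c ≤ ℓ f) → c ≤ lam K := by
    intro K c hc
    refine le_csInf (hne K) ?_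
    rintro r ⟨f, hf, rfl⟩
    exact hc f hf
  have hlam_nonneg : ∀ K, 0 ≤ lam K := fun K => hle_lam K 0 (fun f hf => hpos f hf.1)
  have hlam_le_one : ∀ K, lam K ≤ 1 := by
    intro K
    have := hlam_le K 1 (hone_mem K)
    rwa [hone] at this
  have hlam_mono : ∀ K K' : Set Ω, K ⊆ K' → lam K ≤ lam K' := by
    intro K K' hKK'
    refine csInf_le_csInf (hbdd K) (hne K') (Set.image_mono ?_)
    rintro f ⟨hf0, hf1⟩
    exact ⟨hf0, fun x hx => hf1 x (hKK' hx)⟩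
  have hlam_subadd : ∀ K1 K2 : Set Ω, lam (K1 ∪ K2) ≤ lam K1 + lam K2 := by
    intro K1 K2
    refine le_of_forall_pos_le_add ?_
    intro ε hε
    obtain ⟨r1, hr1mem, hr1⟩ := exists_lt_of_csInf_lt (hne K1)
      (lt_add_of_pos_right (lam K1) (half_pos hε))
    obtain ⟨f1, hf1, rfl⟩ := hr1mem
    obtain ⟨r2, hr2mem, hr2⟩ := exists_lt_of_csInf_lt (hne K2)
      (lt_add_of_pos_right (lam K2) (half_pos hε))
    obtain ⟨f2, hf2, rfl⟩ := hr2mem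
    have hmem : f1 + f2 ∈ cS (K1 ∪ K2) := by
      constructor
      · intro x
        simpa using add_nonneg (hf1.1 x) (hf2.1 x)
      · intro x hx
        rcases hx with hx | hx
        · have := hf1.2 x hx
          have := hf2.1 x
          simp only [ContinuousMap.add_apply]
          linarith
        · have := hf2.2 x hx
          have := hf1.1 x
          simp only [ContinuousMap.add_apply]
          linarith
    have := hlam_le _ _ hmem
    rw [hadd] at this
    linarith
  have hlam_add : ∀ K1 K2 : Set Ω, IsClosed K1 → IsClosed K2 → Disjoint K1 K2 →
      lam K1 + lam K2 ≤ lam (K1 ∪ K2) := by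
    intro K1 K2 hc1 hc2 hdisj
    refine hle_lam _ _ ?_
    rintro f ⟨hf0, hf1⟩
    obtain ⟨χ, hχ0, hχ1, hχmem⟩ := exists_continuous_zero_one_of_isClosed hc1 hc2 hdisj
    set g1 : C(Ω, ℝ) := f * ((1 : C(Ω, ℝ)) - χ) with hg1_def
    set g2 : C(Ω, ℝ) := f * χ with hg2_def
    have hg1mem : g1 ∈ cS K1 := by
      constructor
      · intro x
        simp only [hg1_def, ContinuousMap.mul_apply, ContinuousMap.sub_apply,
          ContinuousMap.one_apply]
        have := (hχmem x).2
        have := hf0 x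
        nlinarith
      · intro x hx
        have hχx : χ x = 0 := hχ0 hx
        simp only [hg1_def, ContinuousMap.mul_apply, ContinuousMap.sub_apply,
          ContinuousMap.one_apply, hχx]
        simpa using hf1 x (Set.mem_union_left _ hx)
    have hg2mem : g2 ∈ cS K2 := by
      constructor
      · intro x
        simp only [hg2_def, ContinuousMap.mul_apply]
        exact mul_nonneg (hf0 x) (hχmem x).1
      · intro x hx
        have hχx : χ x = 1 := hχ1 hx
        simp only [hg2_def, ContinuousMap.mul_apply, hχx, mul_one]
        exact hf1 x (Set.mem_union_right _ hx)
    have hsum : g1 + g2 = f := by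
      ext x
      simp only [ContinuousMap.add_apply, hg1_def, hg2_def, ContinuousMap.mul_apply,
        ContinuousMap.sub_apply, ContinuousMap.one_apply]
      ring
    calc lam K1 + lam K2 ≤ ℓ g1 + ℓ g2 :=
          add_le_add (hlam_le _ _ hg1mem) (hlam_le _ _ hg2mem)
      _ = ℓ (g1 + g2) := (hadd g1 g2).symm
      _ = ℓ f := by rw [hsum]
  -- the content
  set 𝒞 : Content Ω :=
    { toFun := fun K => Real.toNNReal (lam K.1)
      mono' := fun K1 K2 h => Real.toNNReal_mono (hlam_mono _ _ h)
      sup_disjoint' := by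
        intro K1 K2 hdisj hc1 hc2
        have heq : lam (K1.carrier ∪ K2.carrier) = lam K1.carrier + lam K2.carrier :=
          le_antisymm (hlam_subadd _ _) (hlam_add _ _ hc1 hc2 hdisj)
        have hco : (K1 ⊔ K2 : Compacts Ω).carrier = K1.carrier ∪ K2.carrier := rfl
        show (lam (K1 ⊔ K2 : Compacts Ω).carrier).toNNReal
          = (lam K1.carrier).toNNReal + (lam K2.carrier).toNNReal
        rw [hco, heq, Real.toNNReal_add (hlam_nonneg _) (hlam_nonneg _)]
      sup_le' := by
        intro K1 K2
        have hco : (K1 ⊔ K2 : Compacts Ω).carrier = K1.carrier ∪ K2.carrier := rfl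
        show (lam (K1 ⊔ K2 : Compacts Ω).carrier).toNNReal
          ≤ (lam K1.carrier).toNNReal + (lam K2.carrier).toNNReal
        rw [hco]
        calc Real.toNNReal (lam (K1.carrier ∪ K2.carrier))
              ≤ Real.toNNReal (lam K1.carrier + lam K2.carrier) :=
              Real.toNNReal_mono (hlam_subadd _ _)
          _ = Real.toNNReal (lam K1.carrier) + Real.toNNReal (lam K2.carrier) :=
              Real.toNNReal_add (hlam_nonneg _) (hlam_nonneg _) } with h𝒞_def
  set μ : Measure Ω := 𝒞.measure with hμ_def
  -- interleaving facts
  have hG1 : ∀ (U : Set Ω) (hU : IsOpen U) (K : Set Ω) (hK : IsCompact K), U ⊆ K →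
      𝒞.outerMeasure U ≤ ENNReal.ofReal (lam K) := by
    intro U hU K hK hUK
    exact Content.outerMeasure_le 𝒞 ⟨U, hU⟩ ⟨K, hK⟩ hUK
  have hG2 : ∀ (K : Set Ω) (hK : IsCompact K) (U : Set Ω) (hU : IsOpen U), K ⊆ U →
      ENNReal.ofReal (lam K) ≤ 𝒞.outerMeasure U := by
    intro K hK U hU hKU
    have h1 := Content.le_innerContent 𝒞 ⟨K, hK⟩ ⟨U, hU⟩ hKU
    rw [← Content.outerMeasure_opens 𝒞 ⟨U, hU⟩] at h1
    exact h1
  have hμuniv : μ Set.univ = 1 := by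
    rw [hμ_def, Content.measure_apply 𝒞 MeasurableSet.univ]
    refine le_antisymm ?_ ?_
    · calc 𝒞.outerMeasure Set.univ ≤ ENNReal.ofReal (lam Set.univ) :=
            hG1 _ isOpen_univ _ isCompact_univ subset_rfl
        _ ≤ ENNReal.ofReal 1 := ENNReal.ofReal_le_ofReal (hlam_le_one _)
        _ = 1 := ENNReal.ofReal_one
    · have h1 : (1 : ℝ) ≤ lam Set.univ := by
        refine hle_lam _ _ ?_
        rintro f ⟨hf0, hf1⟩
        have := hmono 1 f (fun x => by simpa using hf1 x (Set.mem_univ x))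
        rwa [hone] at this
      calc (1 : ℝ≥0∞) = ENNReal.ofReal 1 := ENNReal.ofReal_one.symm
        _ ≤ ENNReal.ofReal (lam Set.univ) := ENNReal.ofReal_le_ofReal h1
        _ ≤ 𝒞.outerMeasure Set.univ := hG2 _ isCompact_univ _ isOpen_univ subset_rfl
  haveI hprob : IsProbabilityMeasure μ := ⟨hμuniv⟩
  -- the main estimate for normalized functions
  have main : ∀ f : C(Ω, ℝ), (∀ x, 0 ≤ f x) → (∀ x, f x ≤ 1) → ∫ x, f x ∂μ = ℓ f := by
    intro f hf0 hf1
    have hdiff : ∀ n : ℕ, |∫ x, f x ∂μ - ℓ f| ≤ 2 / ((n : ℝ) + 2) := by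
      intro n
      set N : ℕ := n + 2 with hN_def
      have hNR : ((N : ℕ) : ℝ) = (n : ℝ) + 2 := by push_cast [hN_def]; ring
      have hNpos : (0 : ℝ) < (N : ℝ) := by rw [hNR]; positivity
      have hNne : ((N : ℕ) : ℝ) ≠ 0 := ne_of_gt hNpos
      set δ : ℝ := 1 / (N : ℝ) with hδ_def
      have hδpos : 0 < δ := by positivity
      have hNδ : (N : ℝ) * δ = 1 := by rw [hδ_def, mul_one_div, div_self hNne]
      -- superlevel sets
      set K : ℕ → Set Ω := fun i => {x | (i : ℝ) / N ≤ f x} with hK_def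
      set Uo : ℕ → Set Ω := fun i => {x | (i : ℝ) / N < f x} with hUo_def
      have hKc : ∀ i, IsClosed (K i) := fun i => isClosed_le continuous_const f.continuous
      have hKcpt : ∀ i, IsCompact (K i) := fun i => (hKc i).isCompact
      have hKmeas : ∀ i, MeasurableSet (K i) := fun i => (hKc i).measurableSet
      have hUoopen : ∀ i, IsOpen (Uo i) := fun i => isOpen_lt continuous_const f.continuous
      have hKU : ∀ i, K (i + 1) ⊆ Uo i := by
        intro i x hx
        have hx' : ((i : ℝ) + 1) / N ≤ f x := by
          have h0 : (((i + 1 : ℕ) : ℝ)) / N ≤ f x := hx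
          have hkey : (((i + 1 : ℕ)) : ℝ) = (i : ℝ) + 1 := by push_cast; ring
          rwa [hkey] at h0
        have h1 : (i : ℝ) / N < ((i : ℝ) + 1) / N := by
          apply div_lt_div_of_pos_right (by linarith) hNpos
        exact lt_of_lt_of_le h1 hx'
      have hUK : ∀ i, Uo i ⊆ K i := by
        intro i x hx
        exact le_of_lt (show (i : ℝ) / N < f x from hx)
      set a : ℕ → ℝ := fun i => lam (K i) with ha_def
      set b : ℕ → ℝ := fun i => (μ (K i)).toReal with hb_def
      have hb_nonneg : ∀ i, 0 ≤ b i := fun i => ENNReal.toReal_nonneg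
      have hb_le_one : ∀ i, b i ≤ 1 := by
        intro i
        have := prob_le_one (μ := μ) (s := K i)
        calc (μ (K i)).toReal ≤ (1 : ℝ≥0∞).toReal :=
              ENNReal.toReal_mono (by simp) this
          _ = 1 := by simp
      have ha_b : ∀ i, a (i + 1) ≤ b i := by
        intro i
        have h1 : ENNReal.ofReal (a (i + 1)) ≤ 𝒞.outerMeasure (Uo i) :=
          hG2 _ (hKcpt _) _ (hUoopen i) (hKU i)
        have h2 : 𝒞.outerMeasure (Uo i) ≤ 𝒞.outerMeasure (K i) :=
          measure_mono (hUK i)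
        have h3 : (𝒞.outerMeasure (K i) : ℝ≥0∞) = μ (K i) :=
          (Content.measure_apply 𝒞 (hKmeas i)).symm
        have h4 : ENNReal.ofReal (a (i + 1)) ≤ μ (K i) := by
          rw [← h3]; exact h1.trans h2
        have h5 := ENNReal.toReal_mono (measure_ne_top μ _) h4
        rwa [ENNReal.toReal_ofReal (hlam_nonneg _)] at h5
      have hb_a : ∀ i, b (i + 1) ≤ a i := by
        intro i
        have h1 : μ (K (i + 1)) = 𝒞.outerMeasure (K (i + 1)) :=
          Content.measure_apply 𝒞 (hKmeas _)
        have h2 : 𝒞.outerMeasure (K (i + 1)) ≤ 𝒞.outerMeasure (Uo i) :=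
          measure_mono (hKU i)
        have h3 : 𝒞.outerMeasure (Uo i) ≤ ENNReal.ofReal (a i) :=
          hG1 _ (hUoopen i) _ (hKcpt i) (hUK i)
        have h4 : μ (K (i + 1)) ≤ ENNReal.ofReal (a i) := by
          rw [h1]; exact h2.trans h3
        have h5 := ENNReal.toReal_mono ENNReal.ofReal_ne_top h4
        rwa [ENNReal.toReal_ofReal (hlam_nonneg _)] at h5
      -- slices
      set fi : ℕ → C(Ω, ℝ) :=
        fun i => ((f - ContinuousMap.const Ω ((i : ℝ) / N)) ⊔ 0) ⊓ ContinuousMap.const Ω δ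
        with hfi_def
      have hfi_apply : ∀ i x, fi i x = min (max (f x - (i : ℝ) / N) 0) δ := by
        intro i x
        simp [hfi_def]
      have hfi_eq : ∀ (i : ℕ) (x : Ω),
          fi i x = min (f x) (((i + 1 : ℕ) : ℝ) / N) - min (f x) ((i : ℝ) / N) := by
        intro i x
        have hkey : (((i + 1 : ℕ)) : ℝ) = (i : ℝ) + 1 := by push_cast; ring
        rw [hfi_apply, hkey]
        have hcδ : ((i : ℝ) + 1) / (N : ℝ) = (i : ℝ) / N + δ := by
          rw [hδ_def, ← add_div]
        rw [hcδ]
        rcases le_total (f x) ((i : ℝ) / N) with h | h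
        · rw [max_eq_right (by linarith), min_eq_left hδpos.le,
            min_eq_left h, min_eq_left (by linarith)]
          ring
        · rcases le_total (f x) ((i : ℝ) / N + δ) with h' | h'
          · rw [max_eq_left (by linarith), min_eq_left (by linarith),
              min_eq_left h', min_eq_right h]
          · rw [max_eq_left (by linarith), min_eq_right (by linarith),
              min_eq_right h', min_eq_right h]
            ring
      have hfi_nonneg : ∀ i x, 0 ≤ fi i x := by
        intro i x
        rw [hfi_apply]
        exact le_min (le_max_right _ _) hδpos.le
      have hfi_le_δ : ∀ i x, fi i x ≤ δ := by
        intro i x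
        rw [hfi_apply]
        exact min_le_right _ _
      have hfi_zero : ∀ (i : ℕ) (x : Ω), f x < (i : ℝ) / N → fi i x = 0 := by
        intro i x hx
        rw [hfi_apply, max_eq_right (by linarith), min_eq_left hδpos.le]
      have hfi_full : ∀ i x, x ∈ K (i + 1) → fi i x = δ := by
        intro i x hx
        have hx' : ((i : ℝ) + 1) / N ≤ f x := by
          have h0 : (((i + 1 : ℕ) : ℝ)) / N ≤ f x := hx
          have hkey : (((i + 1 : ℕ)) : ℝ) = (i : ℝ) + 1 := by push_cast; ring
          rwa [hkey] at h0
        have h1 : δ ≤ f x - (i : ℝ) / N := by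
          have hcδ : ((i : ℝ) + 1) / (N : ℝ) = (i : ℝ) / N + δ := by
            rw [hδ_def, ← add_div]
          rw [hcδ] at hx'
          linarith
        rw [hfi_apply, max_eq_left (by linarith), min_eq_right h1]
      have hslice_sum : ∀ x, ∑ i ∈ Finset.range N, fi i x = f x := by
        intro x
        have h1 : ∀ i ∈ Finset.range N, fi i x =
            min (f x) (((i + 1 : ℕ) : ℝ) / N) - min (f x) ((i : ℝ) / N) := by
          intro i _
          exact hfi_eq i x
        rw [Finset.sum_congr rfl h1, Finset.sum_range_sub (fun i => min (f x) ((i : ℝ) / N)) N]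
        have hN1 : ((N : ℕ) : ℝ) / ((N : ℕ) : ℝ) = 1 := div_self hNne
        simp only [Nat.cast_zero, zero_div, hN1]
        rw [min_eq_left (hf1 x), min_eq_right (hf0 x)]
        ring
      have hsumℓ : ∀ (m : ℕ) (G : ℕ → C(Ω, ℝ)),
          ℓ (∑ i ∈ Finset.range m, G i) = ∑ i ∈ Finset.range m, ℓ (G i) := by
        intro m G
        induction m with
        | zero => simpa using hzero
        | succ k ih => rw [Finset.sum_range_succ, hadd, ih, Finset.sum_range_succ]
      have hfsum : (∑ i ∈ Finset.range N, fi i) = f := by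
        ext x
        rw [ContinuousMap.sum_apply]
        exact hslice_sum x
      have hℓf : ℓ f = ∑ i ∈ Finset.range N, ℓ (fi i) := by
        rw [← hfsum, hsumℓ]
      -- ℓ bounds per slice
      have hℓ_upper : ∀ i, (N : ℝ) * ℓ (fi i) ≤ a i := by
        intro i
        rw [← hsmul]
        refine hle_lam _ _ ?_
        rintro h ⟨hh0, hh1⟩
        refine hmono _ _ ?_
        intro x
        simp only [ContinuousMap.smul_apply, smul_eq_mul]
        rcases le_or_gt ((i : ℝ) / N) (f x) with hx | hx
        · have h1 : (N : ℝ) * fi i x ≤ (N : ℝ) * δ :=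
            mul_le_mul_of_nonneg_left (hfi_le_δ i x) hNpos.le
          rw [hNδ] at h1
          exact h1.trans (hh1 x hx)
        · rw [hfi_zero i x hx, mul_zero]
          exact hh0 x
      have hℓ_lower : ∀ i, a (i + 1) ≤ (N : ℝ) * ℓ (fi i) := by
        intro i
        rw [← hsmul]
        refine hlam_le _ _ ?_
        constructor
        · intro x
          simp only [ContinuousMap.smul_apply, smul_eq_mul]
          exact mul_nonneg hNpos.le (hfi_nonneg i x)
        · intro x hx
          simp only [ContinuousMap.smul_apply, smul_eq_mul]
          rw [hfi_full i x hx, hNδ]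
      -- integral bounds per slice
      have hint : ∀ g : C(Ω, ℝ), Integrable (fun x => g x) μ := fun g => integrable_cm g μ
      have hIsum : ∫ x, f x ∂μ = ∑ i ∈ Finset.range N, ∫ x, fi i x ∂μ := by
        rw [← integral_finset_sum _ (fun i _ => hint (fi i))]
        congr 1
        funext x
        exact (hslice_sum x).symm
      have hIupper : ∀ i, ∫ x, fi i x ∂μ ≤ δ * b i := by
        intro i
        have hptwise : ∀ x, fi i x ≤ (K i).indicator (fun _ => δ) x := by
          intro x
          rcases le_or_gt ((i : ℝ) / N) (f x) with hx | hx
          · rw [Set.indicator_of_mem (show x ∈ K i from hx)]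
            exact hfi_le_δ i x
          · rw [Set.indicator_of_notMem (show x ∉ K i from not_le.mpr hx)]
            rw [hfi_zero i x hx]
        calc ∫ x, fi i x ∂μ ≤ ∫ x, (K i).indicator (fun _ => δ) x ∂μ :=
              integral_mono (hint _) ((integrable_const δ).indicator (hKmeas i)) hptwise
          _ = (μ (K i)).toReal • δ := integral_indicator_const δ (hKmeas i)
          _ = δ * b i := by rw [smul_eq_mul, mul_comm]
      have hIlower : ∀ i, δ * b (i + 1) ≤ ∫ x, fi i x ∂μ := by
        intro i
        have hptwise : ∀ x, (K (i + 1)).indicator (fun _ => δ) x ≤ fi i x := by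
          intro x
          rcases Classical.em (x ∈ K (i + 1)) with hx | hx
          · rw [Set.indicator_of_mem hx, hfi_full i x hx]
          · rw [Set.indicator_of_notMem hx]
            exact hfi_nonneg i x
        calc δ * b (i + 1) = (μ (K (i + 1))).toReal • δ := by rw [smul_eq_mul, mul_comm]
          _ = ∫ x, (K (i + 1)).indicator (fun _ => δ) x ∂μ :=
              (integral_indicator_const δ (hKmeas _)).symm
          _ ≤ ∫ x, fi i x ∂μ :=
              integral_mono ((integrable_const δ).indicator (hKmeas _)) (hint _) hptwise
      -- the shifted-sum comparison
      have hshift : ∀ p q : ℕ → ℝ, (∀ i, 0 ≤ p i) → (∀ i, p i ≤ 1) → (∀ i, 0 ≤ q i) →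
          (∀ i, q i ≤ 1) →
          (∀ i, p (i + 1) ≤ q i) →
          ∑ i ∈ Finset.range N, p i ≤ 2 + ∑ i ∈ Finset.range N, q (i + 1) := by
        intro p q hp0 hp1 hq0 hq1 hpq
        have h1 : ∑ i ∈ Finset.range (n + 1 + 1), p i
            = ∑ i ∈ Finset.range (n + 1), p (i + 1) + p 0 := Finset.sum_range_succ' p (n + 1)
        have h2 : ∑ i ∈ Finset.range (n + 1), q i
            = ∑ i ∈ Finset.range n, q (i + 1) + q 0 := Finset.sum_range_succ' q n
        have h3 : ∑ i ∈ Finset.range (n + 1), p (i + 1) ≤ ∑ i ∈ Finset.range (n + 1), q i :=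
          Finset.sum_le_sum (fun i _ => hpq i)
        have h4 : ∑ i ∈ Finset.range n, q (i + 1) ≤ ∑ i ∈ Finset.range (n + 1 + 1), q (i + 1) := by
          refine Finset.sum_le_sum_of_subset_of_nonneg ?_ (fun i _ _ => hq0 _)
          exact Finset.range_subset_range.mpr (by omega)
        have h5 : p 0 ≤ 1 := hp1 0
        have h6 : 0 ≤ q 0 := hq0 0
        have h7 : q 0 ≤ 1 := hq1 0
        show ∑ i ∈ Finset.range (n + 1 + 1), p i ≤ 2 + ∑ i ∈ Finset.range (n + 1 + 1), q (i + 1)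
        linarith
      -- assembly
      have hup : ℓ f ≤ 2 / (N : ℝ) + ∫ x, f x ∂μ := by
        have e1 : ∀ i, ℓ (fi i) ≤ a i / N := by
          intro i
          rw [le_div_iff₀ hNpos, mul_comm]
          exact hℓ_upper i
        have e2 : ℓ f ≤ (∑ i ∈ Finset.range N, a i) / N := by
          rw [hℓf, Finset.sum_div]
          exact Finset.sum_le_sum (fun i _ => e1 i)
        have e3 : ∑ i ∈ Finset.range N, a i ≤ 2 + ∑ i ∈ Finset.range N, b (i + 1) :=
          hshift a b (fun i => hlam_nonneg _) (fun i => hlam_le_one _) hb_nonneg hb_le_one ha_b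
        have e4 : (∑ i ∈ Finset.range N, a i) / N
            ≤ 2 / N + ∑ i ∈ Finset.range N, b (i + 1) / N := by
          rw [← Finset.sum_div, ← add_div]
          exact div_le_div_of_nonneg_right e3 hNpos.le
        have e5 : ∑ i ∈ Finset.range N, b (i + 1) / N ≤ ∑ i ∈ Finset.range N, ∫ x, fi i x ∂μ := by
          refine Finset.sum_le_sum (fun i _ => ?_)
          have : b (i + 1) / N = δ * b (i + 1) := by
            rw [hδ_def]; ring
          rw [this]
          exact hIlower i
        rw [← hIsum] at e5
        linarith
      have hdown : ∫ x, f x ∂μ ≤ 2 / (N : ℝ) + ℓ f := by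
        have e1 : ∫ x, f x ∂μ ≤ (∑ i ∈ Finset.range N, b i) / N := by
          rw [hIsum, Finset.sum_div]
          refine Finset.sum_le_sum (fun i _ => ?_)
          have : b i / N = δ * b i := by rw [hδ_def]; ring
          rw [this]
          exact hIupper i
        have e3 : ∑ i ∈ Finset.range N, b i ≤ 2 + ∑ i ∈ Finset.range N, a (i + 1) :=
          hshift b a hb_nonneg hb_le_one (fun i => hlam_nonneg _) (fun i => hlam_le_one _) hb_a
        have e4 : (∑ i ∈ Finset.range N, b i) / N
            ≤ 2 / N + ∑ i ∈ Finset.range N, a (i + 1) / N := by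
          rw [← Finset.sum_div, ← add_div]
          exact div_le_div_of_nonneg_right e3 hNpos.le
        have e5 : ∑ i ∈ Finset.range N, a (i + 1) / N ≤ ∑ i ∈ Finset.range N, ℓ (fi i) := by
          refine Finset.sum_le_sum (fun i _ => ?_)
          rw [div_le_iff₀ hNpos, mul_comm]
          exact hℓ_lower i
        rw [← hℓf] at e5
        linarith
      rw [abs_le]
      constructor
      · rw [hNR] at hup
        linarith
      · rw [hNR] at hdown
        linarith
    -- let n → ∞
    rcases eq_or_lt_of_le (abs_nonneg (∫ x, f x ∂μ - ℓ f)) with h | h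
    · have := h.symm
      rw [abs_eq_zero] at this
      linarith [sub_eq_zero.mp this]
    · exfalso
      set d := |∫ x, f x ∂μ - ℓ f| with hd_def
      obtain ⟨n, hn⟩ := exists_nat_gt (2 / d)
      have hnd : 2 / ((n : ℝ) + 2) < d := by
        rw [div_lt_iff₀ (by positivity)]
        have h1 : 2 / d < (n : ℝ) := hn
        have h2 : 2 < d * n := by
          rw [div_lt_iff₀ h] at h1
          linarith
        nlinarith
      exact absurd (hdiff n) (not_le.mpr hnd)
  -- general continuous functions
  refine ⟨μ, hprob, ?_⟩
  intro g
  set M : ℝ := ‖g‖ + 1 with hM_def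
  have hM : 0 < M := by positivity
  have hgbound : ∀ x, |g x| ≤ ‖g‖ := by
    intro x
    have := g.norm_coe_le_norm x
    rwa [Real.norm_eq_abs] at this
  set h : C(Ω, ℝ) := (1 / (2 * M)) • (g + ContinuousMap.const Ω M) with hh_def
  have hhx : ∀ x, h x = (1 / (2 * M)) * (g x + M) := by
    intro x
    simp only [hh_def, ContinuousMap.smul_apply, ContinuousMap.add_apply,
      ContinuousMap.const_apply, smul_eq_mul]
  have hh0 : ∀ x, 0 ≤ h x := by
    intro x
    rw [hhx]
    have h1 := (abs_le.mp (hgbound x)).1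
    have h2 : 0 ≤ g x + M := by
      simp only [hM_def]
      linarith
    exact mul_nonneg (by positivity) h2
  have hh1 : ∀ x, h x ≤ 1 := by
    intro x
    rw [hhx]
    have h1 := (abs_le.mp (hgbound x)).2
    have h2 : g x + M ≤ 2 * M := by
      simp only [hM_def]
      linarith
    calc (1 / (2 * M)) * (g x + M) ≤ (1 / (2 * M)) * (2 * M) :=
          mul_le_mul_of_nonneg_left h2 (by positivity)
      _ = 1 := by field_simp
  have hmain := main h hh0 hh1
  have hconst : ∀ c : ℝ, ℓ (ContinuousMap.const Ω c) = c := by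
    intro c
    have h1 : ContinuousMap.const Ω c = c • (1 : C(Ω, ℝ)) := by
      ext x
      simp
    rw [h1, hsmul, hone, mul_one]
  have hℓh : ℓ h = (1 / (2 * M)) * (ℓ g + M) := by
    rw [hh_def, hsmul, hadd, hconst]
  have hIh : ∫ x, h x ∂μ = (1 / (2 * M)) * ((∫ x, g x ∂μ) + M) := by
    have e1 : ∫ x, h x ∂μ = ∫ x, (1 / (2 * M)) * (g x + M) ∂μ :=
      integral_congr_ae (Filter.Eventually.of_forall fun x => by rw [hhx])
    rw [e1, MeasureTheory.integral_const_mul,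
      integral_add (integrable_cm g μ) (integrable_const M), integral_const,
      probReal_univ, one_smul]
  rw [hIh, hℓh] at hmain
  have h2M : (1 / (2 * M)) ≠ 0 := by positivity
  have := mul_left_cancel₀ h2M hmain
  linarith


theorem probabilityMeasure_compactSpace : CompactSpace (ProbabilityMeasure Ω) := by
  rcases isEmpty_or_nonempty Ω with hΩ | hΩ
  · haveI : IsEmpty (ProbabilityMeasure Ω) := by
      constructor
      intro P
      have h1 : (P : Measure Ω) Set.univ = 1 := measure_univ
      rw [Set.univ_eq_empty_iff.mpr hΩ, measure_empty] at h1
      exact zero_ne_one h1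
    infer_instance
  · obtain ⟨D, hDcount, hDdense⟩ := TopologicalSpace.exists_countable_dense C(Ω, ℝ)
    obtain ⟨g, hDg⟩ := hDcount.exists_eq_range hDdense.nonempty
    letI : MetricSpace (ProbabilityMeasure Ω) :=
      TopologicalSpace.metrizableSpaceMetric (ProbabilityMeasure Ω)
    have hseq : IsSeqCompact (Set.univ : Set (ProbabilityMeasure Ω)) := by
      intro P _
      set x : ℕ → ℕ → ℝ := fun j k => ∫ ω, g k ω ∂(P j : Measure Ω) with hx_def
      have hxmem : ∀ j, x j ∈ Set.pi Set.univ (fun k => Set.Icc (-(‖g k‖)) ‖g k‖) := by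
        intro j
        intro k _
        have h1 := abs_integral_le (g k) (P j : Measure Ω)
        have h2 := abs_le.mp h1
        exact Set.mem_Icc.mpr h2
      have hcpt : IsCompact (Set.pi Set.univ (fun k => Set.Icc (-(‖g k‖)) ‖g k‖)) :=
        isCompact_univ_pi (fun k => isCompact_Icc)
      obtain ⟨c, -, φ, hφ, hconv⟩ := hcpt.tendsto_subseq hxmem
      have hcoord : ∀ k, Tendsto (fun j => ∫ ω, g k ω ∂(P (φ j) : Measure Ω))
          atTop (𝓝 (c k)) := fun k => tendsto_pi_nhds.mp hconv k
      have hcauchy : ∀ h : C(Ω, ℝ),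
          CauchySeq (fun j => ∫ ω, h ω ∂(P (φ j) : Measure Ω)) := by
        intro h
        rw [Metric.cauchySeq_iff]
        intro ε hε
        obtain ⟨gk', hgk'D, hgk'⟩ := Metric.mem_closure_iff.mp (hDdense h) (ε / 3)
          (by linarith)
        obtain ⟨k, rfl⟩ : ∃ k, g k = gk' := by
          rw [hDg] at hgk'D
          exact hgk'D
        have hck : CauchySeq (fun j => ∫ ω, g k ω ∂(P (φ j) : Measure Ω)) :=
          (hcoord k).cauchySeq
        rw [Metric.cauchySeq_iff] at hck
        obtain ⟨Nb, hNb⟩ := hck (ε / 3) (by linarith)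
        refine ⟨Nb, fun m hm m' hm' => ?_⟩
        have h1 := integral_diff_le h (g k) (P (φ m) : Measure Ω)
        have h2 := integral_diff_le h (g k) (P (φ m') : Measure Ω)
        have h3 := hNb m hm m' hm'
        have h4 : dist (∫ ω, h ω ∂(P (φ m) : Measure Ω)) (∫ ω, h ω ∂(P (φ m') : Measure Ω))
            ≤ dist (∫ ω, h ω ∂(P (φ m) : Measure Ω)) (∫ ω, g k ω ∂(P (φ m) : Measure Ω))
              + dist (∫ ω, g k ω ∂(P (φ m) : Measure Ω)) (∫ ω, g k ω ∂(P (φ m') : Measure Ω))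
              + dist (∫ ω, g k ω ∂(P (φ m') : Measure Ω)) (∫ ω, h ω ∂(P (φ m') : Measure Ω)) :=
          dist_triangle4 _ _ _ _
        have h5 : dist (∫ ω, h ω ∂(P (φ m) : Measure Ω)) (∫ ω, g k ω ∂(P (φ m) : Measure Ω))
            ≤ dist h (g k) := by
          rw [Real.dist_eq]
          exact h1
        have h6 : dist (∫ ω, g k ω ∂(P (φ m') : Measure Ω)) (∫ ω, h ω ∂(P (φ m') : Measure Ω))
            ≤ dist h (g k) := by
          rw [dist_comm, Real.dist_eq]
          exact h2
        have h7 : dist h (g k) < ε / 3 := hgk'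
        calc dist (∫ ω, h ω ∂(P (φ m) : Measure Ω)) (∫ ω, h ω ∂(P (φ m') : Measure Ω))
            ≤ _ := h4
          _ < ε / 3 + ε / 3 + ε / 3 := by
              have := h3
              gcongr <;> linarith
          _ = ε := by ring
      have hlim : ∀ h : C(Ω, ℝ),
          ∃ r, Tendsto (fun j => ∫ ω, h ω ∂(P (φ j) : Measure Ω)) atTop (𝓝 r) :=
        fun h => cauchySeq_tendsto_of_complete (hcauchy h)
      choose ℓ hℓ using hlim
      have hadd : ∀ f g' : C(Ω, ℝ), ℓ (f + g') = ℓ f + ℓ g' := by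
        intro f g'
        have e : ∀ j, ∫ ω, (f + g') ω ∂(P (φ j) : Measure Ω)
            = (∫ ω, f ω ∂(P (φ j) : Measure Ω)) + ∫ ω, g' ω ∂(P (φ j) : Measure Ω) := by
          intro j
          simp only [ContinuousMap.add_apply]
          exact integral_add (integrable_cm _ _) (integrable_cm _ _)
        exact tendsto_nhds_unique (hℓ (f + g'))
          (((hℓ f).add (hℓ g')).congr (fun j => (e j).symm))
      have hsmul : ∀ (r : ℝ) (f : C(Ω, ℝ)), ℓ (r • f) = r * ℓ f := by
        intro r f
        have e : ∀ j, ∫ ω, (r • f) ω ∂(P (φ j) : Measure Ω)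
            = r * ∫ ω, f ω ∂(P (φ j) : Measure Ω) := by
          intro j
          simp only [ContinuousMap.smul_apply, smul_eq_mul]
          exact MeasureTheory.integral_const_mul r _
        exact tendsto_nhds_unique (hℓ (r • f))
          (((hℓ f).const_mul r).congr (fun j => (e j).symm))
      have hpos : ∀ f : C(Ω, ℝ), (∀ ω, (0 : ℝ) ≤ f ω) → 0 ≤ ℓ f := by
        intro f hf
        exact ge_of_tendsto' (hℓ f) (fun j => integral_nonneg hf)
      have hone : ℓ (1 : C(Ω, ℝ)) = 1 := by
        have e : ∀ j, ∫ ω, (1 : C(Ω, ℝ)) ω ∂(P (φ j) : Measure Ω) = 1 := by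
          intro j
          simp
        exact tendsto_nhds_unique (hℓ 1) (tendsto_const_nhds.congr (fun j => (e j).symm))
      obtain ⟨μ, hμprob, hμrep⟩ := exists_repr_measure (Ω := Ω) ℓ hadd hsmul hpos hone
      set μ' : ProbabilityMeasure Ω := ⟨μ, hμprob⟩ with hμ'_def
      refine ⟨μ', Set.mem_univ _, φ, hφ, ?_⟩
      rw [ProbabilityMeasure.tendsto_iff_forall_integral_tendsto]
      intro fb
      have h1 : (∫ ω, fb ω ∂(μ' : Measure Ω)) = ℓ fb.toContinuousMap :=
        hμrep fb.toContinuousMap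
      rw [h1]
      exact hℓ fb.toContinuousMap
    exact ⟨hseq.isCompact⟩


end Aux

/-- **Abstract large deviation upper bound** on the space of Borel probability measures of
a compact metric space `Ω` (with the weak* topology). If `Q : C(Ω,ℝ) → ℝ` is convex and
continuous for the supremum norm, and `limsup_α t_α log ∫ exp(μ(g)/t_α) dν_α(μ) ≤ Q(g)`
for every `g` in a dense subset of `C(Ω,ℝ)`, then for every closed set `F` of probability
measures, `limsup_α t_α log ν_α(F) ≤ −inf_{μ ∈ F} Q*(μ)`, where
`Q*(μ) = sup_{g} (μ(g) − Q(g))` is the Legendre–Fenchel transform of `Q`. -/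
theorem ldp_upper_bound_of_pressure_inequality
    {Ω : Type*} [MetricSpace Ω] [CompactSpace Ω] [MeasurableSpace Ω] [BorelSpace Ω]
    [MeasurableSpace (ProbabilityMeasure Ω)] [BorelSpace (ProbabilityMeasure Ω)]
    {A : Type*} [Preorder A] [IsDirected A (· ≤ ·)] [Nonempty A]
    (ν : A → Measure (ProbabilityMeasure Ω)) (hprob : ∀ α, IsProbabilityMeasure (ν α))
    (t : A → ℝ) (htpos : ∀ α, 0 < t α) (htlim : Tendsto t atTop (𝓝 0))
    (Q : C(Ω, ℝ) → ℝ) (hQconv : ConvexOn ℝ Set.univ Q) (hQcont : Continuous Q)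
    (C : Set C(Ω, ℝ)) (hCdense : Dense C)
    (hub : ∀ g ∈ C,
      Filter.limsup
        (fun α => (t α : EReal) *
          ENNReal.log (∫⁻ μ : ProbabilityMeasure Ω,
            ENNReal.ofReal (Real.exp ((∫ x, g x ∂(μ : Measure Ω)) / t α)) ∂(ν α)))
        Filter.atTop ≤ (Q g : EReal))
    (Qstar : ProbabilityMeasure Ω → EReal)
    (hQstar : ∀ μ : ProbabilityMeasure Ω,
      Qstar μ = ⨆ g : C(Ω, ℝ), (((∫ x, g x ∂(μ : Measure Ω)) - Q g : ℝ) : EReal)) :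
    ∀ F : Set (ProbabilityMeasure Ω), IsClosed F →
      Filter.limsup (fun α => (t α : EReal) * ENNReal.log (ν α F)) Filter.atTop
        ≤ -(⨅ μ ∈ F, Qstar μ) := by
  intro F hF
  haveI : CompactSpace (ProbabilityMeasure Ω) := probabilityMeasure_compactSpace
  rcases F.eq_empty_or_nonempty with rfl | hFne
  · have hu : ∀ α, (t α : EReal) * ENNReal.log (ν α (∅ : Set (ProbabilityMeasure Ω))) = ⊥ := by
      intro α
      rw [measure_empty, ENNReal.log_zero, EReal.mul_bot_of_pos]
      exact_mod_cast htpos α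
    calc Filter.limsup (fun α => (t α : EReal) * ENNReal.log (ν α (∅ : Set (ProbabilityMeasure Ω))))
          Filter.atTop = ⊥ := by
            simp only [hu]; exact limsup_const ⊥
      _ ≤ _ := bot_le
  -- notation
  set u : A → EReal := fun α => (t α : EReal) * ENNReal.log (ν α F) with hu_def
  set I : EReal := ⨅ μ ∈ F, Qstar μ with hI_def
  -- main step
  have key : ∀ L : ℝ, (L : EReal) < I → Filter.limsup u Filter.atTop ≤ ((-L : ℝ) : EReal) := by
    intro L hL
    obtain ⟨L', hLL', hL'I⟩ := EReal.exists_between_coe_real hL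
    have hLL'r : L < L' := by exact_mod_cast hLL'
    set ε : ℝ := (L' - L) / 2 with hε_def
    have hε : 0 < ε := by simp [hε_def]; linarith
    -- the open sets
    set ev : C(Ω, ℝ) → ProbabilityMeasure Ω → ℝ :=
      fun g μ' => ∫ x, g x ∂(μ' : Measure Ω) with hev_def
    have hevc : ∀ g, Continuous (ev g) := fun g => continuous_eval_pm g
    set U : C(Ω, ℝ) → Set (ProbabilityMeasure Ω) :=
      fun g => {μ' | L' + Q g < ev g μ'} with hU_def
    have hUopen : ∀ g, IsOpen (U g) := by
      intro g
      have : U g = (ev g) ⁻¹' (Set.Ioi (L' + Q g)) := rfl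
      rw [this]
      exact (isOpen_Ioi).preimage (hevc g)
    -- covering
    have hcover : ∀ μ ∈ F, ∃ g ∈ C, μ ∈ U g := by
      intro μ hμ
      have h1 : (L' : EReal) < Qstar μ := lt_of_lt_of_le hL'I (biInf_le _ hμ)
      rw [hQstar] at h1
      rw [lt_iSup_iff] at h1
      obtain ⟨g0, hg0⟩ := h1
      have hg0r : L' < ev g0 μ - Q g0 := by exact_mod_cast hg0
      set η : ℝ := (ev g0 μ - Q g0 - L') / 3 with hη_def
      have hηpos : 0 < η := by simp [hη_def]; linarith
      obtain ⟨δ, hδpos, hδ⟩ := Metric.continuous_iff.mp hQcont g0 η hηpos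
      obtain ⟨g, hgC, hgdist⟩ := Metric.mem_closure_iff.mp (hCdense g0) (min δ η)
        (lt_min hδpos hηpos)
      refine ⟨g, hgC, ?_⟩
      have hdistsymm : dist g g0 < min δ η := by rwa [dist_comm] at hgdist
      have hQclose : |Q g - Q g0| < η := by
        have := hδ g (lt_of_lt_of_le hdistsymm (min_le_left _ _))
        rwa [Real.dist_eq] at this
      have hevclose : |ev g μ - ev g0 μ| ≤ dist g g0 := integral_diff_le g g0 μ
      have : dist g g0 < η := lt_of_lt_of_le hdistsymm (min_le_right _ _)
      have habs1 : ev g0 μ - ev g μ ≤ |ev g μ - ev g0 μ| := by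
        rw [abs_sub_comm]; exact le_abs_self _
      have habs2 : Q g - Q g0 ≤ |Q g - Q g0| := le_abs_self _
      show L' + Q g < ev g μ
      nlinarith [abs_nonneg (ev g μ - ev g0 μ)]
    -- compactness: finite subcover
    have hFc : IsCompact F := hF.isCompact
    have hsub : F ⊆ ⋃ i : C, U i.1 := by
      intro μ hμ
      obtain ⟨g, hgC, hgU⟩ := hcover μ hμ
      exact Set.mem_iUnion.mpr ⟨⟨g, hgC⟩, hgU⟩
    obtain ⟨s, hs⟩ := hFc.elim_finite_subcover (fun i : C => U i.1) (fun i => hUopen i.1) hsub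
    have hsne : s.Nonempty := by
      obtain ⟨μ, hμ⟩ := hFne
      obtain ⟨i, hi, -⟩ := Set.mem_iUnion₂.mp (hs hμ)
      exact ⟨i, hi⟩
    set n : ℕ := s.card with hn_def
    have hnpos : 0 < n := Finset.card_pos.mpr hsne
    have hnposR : (0 : ℝ) < n := by exact_mod_cast hnpos
    -- eventual bounds
    have hE1 : ∀ᶠ α in atTop, ∀ i ∈ s,
        (t α : EReal) * ENNReal.log (∫⁻ μ : ProbabilityMeasure Ω,
          ENNReal.ofReal (Real.exp ((∫ x, (i : C(Ω, ℝ)) x ∂(μ : Measure Ω)) / t α)) ∂(ν α))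
          < ((Q i.1 + ε : ℝ) : EReal) := by
      rw [Filter.eventually_all_finset]
      intro i _
      have hblt := lt_of_le_of_lt (hub i.1 i.2)
        (by exact_mod_cast (by linarith : Q i.1 < Q i.1 + ε) :
          (Q i.1 : EReal) < ((Q i.1 + ε : ℝ) : EReal))
      exact Filter.eventually_lt_of_limsup_lt hblt
    have hE2 : ∀ᶠ α in atTop, t α * Real.log n ≤ ε := by
      have htend : Tendsto (fun α => t α * Real.log n) atTop (𝓝 (0 * Real.log n)) :=
        htlim.mul_const _
      rw [zero_mul] at htend
      exact htend.eventually_le_const hε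
    refine Filter.limsup_le_of_le ?_ ?_
    · isBoundedDefault
    filter_upwards [hE1, hE2] with α hα1 hα2
    set tt : ℝ := t α with htt_def
    have htt : 0 < tt := htpos α
    have httne : tt ≠ 0 := ne_of_gt htt
    -- per-element bound on measures of U g
    have hMB : ∀ i ∈ s, ν α (U i.1) ≤ ENNReal.ofReal (Real.exp ((ε - L') / tt)) := by
      intro i hi
      set g : C(Ω, ℝ) := i.1 with hg_def
      set Z : ℝ≥0∞ := ∫⁻ μ : ProbabilityMeasure Ω,
        ENNReal.ofReal (Real.exp ((∫ x, g x ∂(μ : Measure Ω)) / tt)) ∂(ν α) with hZ_def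
      have hZB : Z ≤ ENNReal.ofReal (Real.exp ((Q g + ε) / tt)) := by
        by_contra hcon
        push_neg at hcon
        have hlt : ((Q g + ε) / tt : ℝ) < ENNReal.log Z := by
          have := ENNReal.log_strictMono hcon
          rwa [ENNReal.log_ofReal_of_pos (Real.exp_pos _), Real.log_exp] at this
        have hmul : (tt : EReal) * (((Q g + ε) / tt : ℝ) : EReal) ≤ (tt : EReal) * ENNReal.log Z :=
          mul_le_mul_of_nonneg_left hlt.le (by exact_mod_cast htt.le)
        rw [← EReal.coe_mul, mul_div_cancel₀ _ httne] at hmul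
        exact absurd (lt_of_le_of_lt hmul (hα1 i hi)) (by simp [hg_def])
      set c : ℝ≥0∞ := ENNReal.ofReal (Real.exp ((L' + Q g) / tt)) with hc_def
      have hcne0 : c ≠ 0 := by
        simp [hc_def, ENNReal.ofReal_eq_zero, not_le, Real.exp_pos]
      have hcnetop : c ≠ ⊤ := ENNReal.ofReal_ne_top
      have hfmeas : Measurable (fun μ' : ProbabilityMeasure Ω =>
          ENNReal.ofReal (Real.exp ((∫ x, g x ∂(μ' : Measure Ω)) / tt))) := by
        apply ENNReal.measurable_ofReal.comp
        exact (Real.continuous_exp.comp ((continuous_eval_pm g).div_const tt)).measurable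
      have hsubset : U g ⊆ {μ' : ProbabilityMeasure Ω |
          c ≤ ENNReal.ofReal (Real.exp ((∫ x, g x ∂(μ' : Measure Ω)) / tt))} := by
        intro μ' hμ'
        have h1 : L' + Q g < ∫ x, g x ∂(μ' : Measure Ω) := hμ'
        have h2 : (L' + Q g) / tt ≤ (∫ x, g x ∂(μ' : Measure Ω)) / tt :=
          div_le_div_of_nonneg_right h1.le htt.le
        exact ENNReal.ofReal_le_ofReal (Real.exp_le_exp.mpr h2)
      have hmarkov : c * ν α (U g) ≤ Z := by
        calc c * ν α (U g) ≤ c * ν α {μ' : ProbabilityMeasure Ω |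
              c ≤ ENNReal.ofReal (Real.exp ((∫ x, g x ∂(μ' : Measure Ω)) / tt))} :=
              mul_le_mul_of_nonneg_left (measure_mono hsubset) zero_le
          _ ≤ Z := mul_meas_ge_le_lintegral₀ hfmeas.aemeasurable c
      have hkey : c * ν α (U g) ≤ c * ENNReal.ofReal (Real.exp ((ε - L') / tt)) := by
        refine hmarkov.trans (hZB.trans (le_of_eq ?_))
        rw [hc_def, ← ENNReal.ofReal_mul (Real.exp_pos _).le, ← Real.exp_add]
        congr 1
        field_simp
        ring
      exact (ENNReal.mul_le_mul_iff_right hcne0 hcnetop).mp hkey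
    -- sum bound
    have hsum : ν α F ≤ ENNReal.ofReal (Real.exp (Real.log n + (ε - L') / tt)) := by
      calc ν α F ≤ ν α (⋃ i ∈ s, U i.1) := measure_mono (hs.trans (by rfl))
        _ ≤ ∑ i ∈ s, ν α (U i.1) := measure_biUnion_finset_le s _
        _ ≤ s.card • ENNReal.ofReal (Real.exp ((ε - L') / tt)) :=
            Finset.sum_le_card_nsmul s _ _ hMB
        _ = (n : ℝ≥0∞) * ENNReal.ofReal (Real.exp ((ε - L') / tt)) := by
            rw [nsmul_eq_mul]
        _ = ENNReal.ofReal (Real.exp (Real.log n + (ε - L') / tt)) := by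
            rw [Real.exp_add, Real.exp_log hnposR, ← ENNReal.ofReal_natCast n,
              ← ENNReal.ofReal_mul (by positivity)]
    -- conclude
    have hlogle : ENNReal.log (ν α F) ≤ ((Real.log n + (ε - L') / tt : ℝ) : EReal) := by
      have := ENNReal.log_monotone hsum
      rwa [ENNReal.log_ofReal_of_pos (Real.exp_pos _), Real.log_exp] at this
    calc u α = (tt : EReal) * ENNReal.log (ν α F) := rfl
      _ ≤ (tt : EReal) * ((Real.log n + (ε - L') / tt : ℝ) : EReal) :=
          mul_le_mul_of_nonneg_left hlogle (by exact_mod_cast htt.le)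
      _ = ((tt * (Real.log n + (ε - L') / tt) : ℝ) : EReal) := by rw [EReal.coe_mul]
      _ = ((tt * Real.log n + (ε - L') : ℝ) : EReal) := by
          congr 1
          rw [mul_add, mul_div_cancel₀ _ httne]
      _ ≤ ((ε + (ε - L') : ℝ) : EReal) := by
          exact_mod_cast add_le_add_left hα2 _
      _ = ((-L : ℝ) : EReal) := by
          congr 1
          rw [hε_def]; ring
  -- conclude from key
  rcases eq_or_ne I ⊥ with hIbot | hIne
  · rw [hIbot]
    simp
  · have : ∀ z : ℝ, -I < (z : EReal) → Filter.limsup u Filter.atTop ≤ (z : EReal) := by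
      intro z hz
      have h1 : ((-z : ℝ) : EReal) < I := by
        rw [EReal.coe_neg]
        rwa [EReal.neg_lt_comm] at hz
      have := key (-z) h1
      rwa [neg_neg] at this
    exact EReal.le_of_forall_lt_iff_le.mp this
end

section
/- Let K be a compact metrizable topological space, let (ν_α)_{α∈A} be a net of Borel probability measures on K, let (t_α)_{α∈A} be a net of positive reals converging to 0, and let I : K → [0,+∞] be lower semicontinuous. Assume the large deviation upper bound: limsup_α t_α log ν_α(F) ≤ −inf_{x∈F} I(x) for every closed set F ⊆ K. If ν is a cluster point of the net (ν_α) in the topology of weak convergence of probability measures (i.e., some subnet of (ν_α) converges weakly to ν), then ν({x ∈ K : I(x) > 0}) = 0; equivalently, the topological support of ν is contained in the set {x ∈ K : I(x) = 0}. -/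
open MeasureTheory Filter Topology
open scoped ENNReal NNReal

private lemma my_cancel {r : ℝ} (hr : 0 < r) {a b : EReal}
    (h : (r : EReal) * a < (r : EReal) * b) : a < b := by
  have hbot : (r : EReal) ≠ ⊥ := by simp
  have htop : (r : EReal) ≠ ⊤ := by simp
  have hne : (r : EReal) ≠ 0 := by exact_mod_cast hr.ne'
  have key : ∀ x : EReal, ((r : EReal) * x) / r = x := fun x => by
    rw [mul_comm, ← EReal.mul_div, EReal.div_self hbot htop hne, mul_one]
  have h2 := EReal.div_lt_div_right_of_pos (by exact_mod_cast hr) htop h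
  rwa [key, key] at h2


/-- If a net of Borel probability measures on a compact metrizable space satisfies the
large deviation upper bound with a lower semicontinuous `[0,+∞]`-valued rate function `I`,
then every cluster point `νlim` of the net (for the topology of weak convergence) gives
zero mass to the set where `I` is positive, i.e. its support is contained in the zero set
of `I`. -/
theorem clusterPoint_supported_on_rate_zero_set
    {K : Type*} [TopologicalSpace K] [CompactSpace K] [TopologicalSpace.MetrizableSpace K]
    [MeasurableSpace K] [BorelSpace K]
    {A : Type*} [Preorder A] [IsDirected A (· ≤ ·)] [Nonempty A]
    (ν : A → ProbabilityMeasure K)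
    (t : A → ℝ) (htpos : ∀ α, 0 < t α) (htlim : Tendsto t atTop (𝓝 0))
    (I : K → EReal) (hIpos : ∀ x, 0 ≤ I x) (hIlsc : LowerSemicontinuous I)
    (hub : ∀ F : Set K, IsClosed F →
      Filter.limsup (fun α => (t α : EReal) * ENNReal.log ((ν α : Measure K) F))
        Filter.atTop ≤ -(⨅ x ∈ F, I x))
    (νlim : ProbabilityMeasure K) (hcluster : MapClusterPt νlim atTop ν) :
    (νlim : Measure K) {x : K | 0 < I x} = 0 := by
  -- Step 1
  have step1 : ∀ F : Set K, IsClosed F → 0 < (⨅ x ∈ F, I x) →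
      Tendsto (fun α => (ν α : Measure K) F) atTop (𝓝 0) := by
    intro F hF hc
    obtain ⟨ε, hε0, hεc⟩ := EReal.exists_between_coe_real hc
    have hε0' : (0:ℝ) < ε := by exact_mod_cast hε0
    have hlim : limsup (fun α => (t α : EReal) * ENNReal.log ((ν α : Measure K) F)) atTop
        < ((-ε : ℝ) : EReal) := by
      refine lt_of_le_of_lt (hub F hF) ?_
      rw [EReal.coe_neg]
      exact EReal.neg_lt_neg_iff.mpr hεc
    have hev := eventually_lt_of_limsup_lt hlim
    rw [ENNReal.tendsto_nhds_zero]
    intro δ hδ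
    have hev2 : ∀ᶠ α in atTop, ((-ε:ℝ) : EReal) ≤ (t α : EReal) * ENNReal.log δ := by
      rcases le_or_gt 0 (ENNReal.log δ) with hM | hM
      · refine Eventually.of_forall fun α => ?_
        have h1 : (0:EReal) ≤ (t α : EReal) * ENNReal.log δ :=
          mul_nonneg (by exact_mod_cast (htpos α).le) hM
        refine le_trans ?_ h1
        exact_mod_cast (neg_nonpos.mpr hε0'.le)
      · have hbot : ENNReal.log δ ≠ ⊥ := by
          rw [Ne, ENNReal.log_eq_bot_iff]
          exact hδ.ne'
        have htopM : ENNReal.log δ ≠ ⊤ := (hM.trans (by simp : (0:EReal) < ⊤)).ne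
        set m := (ENNReal.log δ).toReal with hm
        have hMm : ENNReal.log δ = (m : EReal) := (EReal.coe_toReal htopM hbot).symm
        have ht2 : Tendsto (fun α => t α * m) atTop (𝓝 0) := by
          simpa using htlim.mul_const m
        have hev3 := ht2.eventually_const_lt (show -ε < 0 by linarith)
        filter_upwards [hev3] with α hα
        rw [hMm, ← EReal.coe_mul]
        exact_mod_cast hα.le
    filter_upwards [hev, hev2] with α h1 h2
    have h3 : (t α : EReal) * ENNReal.log ((ν α : Measure K) F)
        < (t α : EReal) * ENNReal.log δ := lt_of_lt_of_le h1 h2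
    exact (ENNReal.log_lt_log_iff.mp (my_cancel (htpos α) h3)).le
  obtain ⟨U, hUle, hUtend⟩ := mapClusterPt_iff_ultrafilter.mp hcluster
  -- Step 2
  have step2 : ∀ F : Set K, IsClosed F → 0 < (⨅ x ∈ F, I x) → (νlim : Measure K) F = 0 := by
    intro F hF hc
    obtain ⟨c, hc0, hcI⟩ := EReal.exists_between_coe_real hc
    set G : Set K := {x | (c:EReal) < I x} with hGdef
    have hGopen : IsOpen G := hIlsc.isOpen_preimage (c : EReal)
    have hFG : F ⊆ G := fun x hx => lt_of_lt_of_le hcI (iInf₂_le x hx)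
    obtain ⟨g, hg0, hg1, hg01⟩ := exists_continuous_zero_one_of_isClosed
      hGopen.isClosed_compl hF ((disjoint_compl_left (a := G)).mono_right hFG)
    let g' : C(K, ℝ≥0) := ⟨fun x => (g x).toNNReal,
      continuous_real_toNNReal.comp g.continuous⟩
    let fb : BoundedContinuousFunction K ℝ≥0 := BoundedContinuousFunction.mkOfCompact g'
    have hfb : ∀ x, fb x = (g x).toNNReal := fun x => rfl
    have hfb1 : ∀ x, fb x ≤ 1 := fun x => by
      rw [hfb]
      exact Real.toNNReal_le_one.mpr (hg01 x).2
    have hfbF : ∀ x ∈ F, fb x = 1 := fun x hx => by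
      rw [hfb, hg1 hx]; simp
    have hkey := (ProbabilityMeasure.tendsto_iff_forall_lintegral_tendsto.mp hUtend) fb
    have hlow : (νlim : Measure K) F ≤ ∫⁻ x, fb x ∂(νlim : Measure K) := by
      rw [← lintegral_indicator_one hF.measurableSet]
      refine lintegral_mono fun x => ?_
      by_cases hx : x ∈ F
      · simp [hx, hfbF x hx]
      · simp [hx]
    have hupper : ∀ s : ℝ≥0, 0 < s → (∫⁻ x, fb x ∂(νlim : Measure K)) ≤ s := by
      intro s hs
      set Fs : Set K := {x | (s:ℝ) ≤ g x} with hFsdef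
      have hFs_closed : IsClosed Fs := isClosed_le continuous_const g.continuous
      have hFsG : Fs ⊆ G := by
        intro x hx
        by_contra hxG
        have h0 : g x = 0 := hg0 hxG
        have : (s:ℝ) ≤ 0 := by rw [← h0]; exact hx
        exact absurd this (not_le.mpr (by exact_mod_cast hs))
      have hinf : 0 < ⨅ x ∈ Fs, I x :=
        lt_of_lt_of_le (show (0:EReal) < c by exact_mod_cast hc0)
          (le_iInf₂ fun x hx => (hFsG hx).le)
      have htend := (step1 Fs hFs_closed hinf).mono_left hUle
      have hptwise : ∀ α, (∫⁻ x, fb x ∂(ν α : Measure K)) ≤ (ν α : Measure K) Fs + s := by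
        intro α
        have hpt : ∀ x, (fb x : ℝ≥0∞) ≤ Fs.indicator 1 x + (s : ℝ≥0∞) := by
          intro x
          by_cases hx : x ∈ Fs
          · simp only [Set.indicator_of_mem hx, Pi.one_apply]
            exact le_add_right (by exact_mod_cast hfb1 x)
          · simp only [Set.indicator_of_notMem hx, zero_add]
            have : g x ≤ (s:ℝ) := le_of_not_ge hx
            have : (g x).toNNReal ≤ s := by
              rw [← Real.toNNReal_coe (r := s)]
              exact Real.toNNReal_mono this
            rw [hfb]
            exact_mod_cast this
        calc (∫⁻ x, fb x ∂(ν α : Measure K))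
            ≤ ∫⁻ x, (Fs.indicator 1 x + (s:ℝ≥0∞)) ∂(ν α : Measure K) :=
              lintegral_mono hpt
          _ = (ν α : Measure K) Fs + s := by
              rw [lintegral_add_right _ measurable_const,
                lintegral_indicator_one hFs_closed.measurableSet, lintegral_const,
                measure_univ, mul_one]
      have hlim2 : Tendsto (fun α => (ν α : Measure K) Fs + (s:ℝ≥0∞)) U
          (𝓝 ((0:ℝ≥0∞) + s)) := htend.add tendsto_const_nhds
      have := le_of_tendsto_of_tendsto' hkey hlim2 hptwise
      simpa using this
    have hzero : (∫⁻ x, fb x ∂(νlim : Measure K)) = 0 := by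
      refine le_antisymm ?_ (zero_le)
      refine ENNReal.le_of_forall_pos_le_add fun ε hε _ => ?_
      simpa using hupper ε hε
    exact le_antisymm (hzero ▸ hlow) (zero_le)
  -- Step 3
  have step3 : ∀ c : ℝ, 0 < c → (νlim : Measure K) {x | (c:EReal) < I x} = 0 := by
    intro c hc
    have hopen : IsOpen {x : K | (c:EReal) < I x} := hIlsc.isOpen_preimage _
    rw [hopen.measure_eq_iSup_isClosed]
    refine le_antisymm (iSup₂_le fun F hFsub => iSup_le fun hFclosed => ?_) (zero_le)
    rw [step2 F hFclosed (lt_of_lt_of_le (show (0:EReal) < c by exact_mod_cast hc)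
      (le_iInf₂ fun x hx => (hFsub hx).le))]
  -- Step 4
  have hun : {x : K | 0 < I x} = ⋃ n : ℕ, {x | (((1:ℝ)/(n+1) : ℝ) : EReal) < I x} := by
    ext x
    simp only [Set.mem_setOf_eq, Set.mem_iUnion]
    constructor
    · intro hx
      obtain ⟨y, hy0, hyx⟩ := EReal.exists_between_coe_real hx
      have hy0' : (0:ℝ) < y := by exact_mod_cast hy0
      obtain ⟨n, hn⟩ := exists_nat_one_div_lt hy0'
      exact ⟨n, lt_trans (by exact_mod_cast hn) hyx⟩
    · rintro ⟨n, hn⟩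
      refine lt_trans ?_ hn
      exact EReal.coe_pos.mpr (by positivity)
  rw [hun]
  exact measure_iUnion_null fun n => step3 _ Nat.one_div_pos_of_nat
end

section
/- Let K be a compact metrizable topological space, let (ν_α)_{α∈A} be a net of Borel probability measures on K, let (t_α)_{α∈A} be a net of positive reals converging to 0, and let I : K → [0,+∞] be lower semicontinuous with {x ∈ K : I(x) = 0} = {x₀} a singleton. If limsup_α t_α log ν_α(F) ≤ −inf_{x∈F} I(x) for every closed set F ⊆ K, then the net (ν_α) converges, in the topology of weak convergence of probability measures, to the Dirac measure δ_{x₀}. -/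
open MeasureTheory Filter Topology
open scoped ENNReal

/-- If a net of Borel probability measures on a compact metrizable space satisfies the
large deviation upper bound with a lower semicontinuous `[0,+∞]`-valued rate function `I`
whose zero set is a singleton `{x₀}`, then the net converges weakly to the Dirac measure
at `x₀`. -/
theorem tendsto_dirac_of_unique_rate_zero
    {K : Type*} [TopologicalSpace K] [CompactSpace K] [TopologicalSpace.MetrizableSpace K]
    [MeasurableSpace K] [BorelSpace K]
    {A : Type*} [Preorder A] [IsDirected A (· ≤ ·)] [Nonempty A]
    (ν : A → ProbabilityMeasure K)
    (t : A → ℝ) (htpos : ∀ α, 0 < t α) (htlim : Tendsto t atTop (𝓝 0))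
    (I : K → EReal) (hIpos : ∀ x, 0 ≤ I x) (hIlsc : LowerSemicontinuous I)
    (x₀ : K) (hzero : {x : K | I x = 0} = {x₀})
    (hub : ∀ F : Set K, IsClosed F →
      Filter.limsup (fun α => (t α : EReal) * ENNReal.log ((ν α : Measure K) F))
        Filter.atTop ≤ -(⨅ x ∈ F, I x)) :
    Tendsto ν atTop (𝓝 (⟨Measure.dirac x₀, inferInstance⟩ : ProbabilityMeasure K)) := by
  letI := TopologicalSpace.metrizableSpaceMetric K
  -- Key lemma: for closed F not containing x₀, ν α F → 0.
  have key : ∀ F : Set K, IsClosed F → x₀ ∉ F →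
      Tendsto (fun α => ((ν α : Measure K) F)) atTop (𝓝 0) := by
    intro F hF hx
    -- The infimum of I over F is positive.
    have hc0 : 0 ≤ ⨅ x ∈ F, I x := le_iInf fun x => le_iInf fun _ => hIpos x
    have hcne : (⨅ x ∈ F, I x) ≠ 0 := by
      intro hc
      -- build a decreasing sequence of nonempty compact sets
      set C : ℕ → Set K := fun n => F ∩ {x | I x ≤ ((1 / (n + 1) : ℝ) : EReal)} with hC
      have hCclosed : ∀ n, IsClosed (C n) :=
        fun n => hF.inter (hIlsc.isClosed_preimage _)
      have hCne : ∀ n, (C n).Nonempty := by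
        intro n
        have hlt : (⨅ x ∈ F, I x) < ((1 / (n + 1) : ℝ) : EReal) := by
          rw [hc]
          exact_mod_cast EReal.coe_lt_coe_iff.mpr (by positivity)
        obtain ⟨x, hx2⟩ := iInf_lt_iff.mp hlt
        obtain ⟨hxF, hxlt⟩ := iInf_lt_iff.mp hx2
        exact ⟨x, hxF, Set.mem_setOf_eq ▸ le_of_lt hxlt⟩
      have hCsub : ∀ n, C (n + 1) ⊆ C n := by
        intro n x hxmem
        simp only [hC, Set.mem_inter_iff, Set.mem_setOf_eq] at hxmem ⊢
        refine ⟨hxmem.1, le_trans hxmem.2 ?_⟩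
        apply EReal.coe_le_coe_iff.mpr
        apply one_div_le_one_div_of_le (by positivity)
        push_cast; linarith
      obtain ⟨x, hxmem⟩ :=
        IsCompact.nonempty_iInter_of_sequence_nonempty_isCompact_isClosed C hCsub hCne
          (hCclosed 0).isCompact hCclosed
      have hxF : x ∈ F := (Set.mem_iInter.mp hxmem 0).1
      have hxI : I x = 0 := by
        refine le_antisymm ?_ (hIpos x)
        by_contra hpos
        push_neg at hpos
        obtain ⟨r, hr0, hrI⟩ := EReal.exists_between_coe_real hpos
        have hr0' : (0:ℝ) < r := EReal.coe_lt_coe_iff.mp hr0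
        obtain ⟨n, hn⟩ := exists_nat_one_div_lt hr0'
        have hmem2 : I x ≤ ((1 / (n + 1) : ℝ) : EReal) := (Set.mem_iInter.mp hxmem n).2
        have : I x < I x :=
          lt_of_le_of_lt hmem2 (lt_trans (EReal.coe_lt_coe_iff.mpr hn) hrI)
        exact lt_irrefl _ this
      have : x ∈ ({x₀} : Set K) := hzero ▸ hxI
      exact hx (this ▸ hxF)
    have hcpos : 0 < ⨅ x ∈ F, I x := hc0.lt_of_ne' hcne
    obtain ⟨ε, hε0, hεc⟩ := EReal.exists_between_coe_real hcpos
    have hε0' : (0:ℝ) < ε := EReal.coe_lt_coe_iff.mp hε0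
    have hev : ∀ᶠ α in atTop,
        (t α : EReal) * ENNReal.log ((ν α : Measure K) F) < -(ε : EReal) :=
      eventually_lt_of_limsup_lt (lt_of_le_of_lt (hub F hF) (EReal.neg_lt_neg_iff.mpr hεc))
    rw [ENNReal.tendsto_nhds_zero]
    intro δ hδ
    by_cases hδ1 : 1 ≤ δ
    · exact Eventually.of_forall fun α => le_trans prob_le_one hδ1
    push_neg at hδ1
    -- δ < 1, so log δ is a negative real
    have hδbot : ENNReal.log δ ≠ ⊥ := by simp [hδ.ne']
    have hδtop : ENNReal.log δ ≠ ⊤ := by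
      simp [(lt_trans hδ1 ENNReal.one_lt_top).ne]
    set r : ℝ := (ENNReal.log δ).toReal with hr
    have hrδ : (r : EReal) = ENNReal.log δ := EReal.coe_toReal hδtop hδbot
    have hrneg : r < 0 := by
      have : ENNReal.log δ < 0 := by
        rw [show (0:EReal) = ENNReal.log 1 by simp]
        exact ENNReal.log_lt_log_iff.mpr hδ1
      rw [← hrδ] at this
      exact_mod_cast this
    have hevt : ∀ᶠ α in atTop, t α < ε / (-r) :=
      htlim.eventually_lt_const (div_pos hε0' (neg_pos.mpr hrneg))
    filter_upwards [hev, hevt] with α h1 h2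
    -- show ν α F ≤ δ
    rw [← ENNReal.log_le_log_iff, ← hrδ]
    rcases eq_or_ne (ENNReal.log ((ν α : Measure K) F)) ⊥ with hbot | hnbot
    · rw [hbot]; exact bot_le
    have hntop : ENNReal.log ((ν α : Measure K) F) ≠ ⊤ := by
      simp [(lt_of_le_of_lt prob_le_one ENNReal.one_lt_top).ne]
    set L : ℝ := (ENNReal.log ((ν α : Measure K) F)).toReal with hL
    have hLeq : (L : EReal) = ENNReal.log ((ν α : Measure K) F) :=
      EReal.coe_toReal hntop hnbot
    rw [← hLeq] at h1 ⊢
    rw [← EReal.coe_mul] at h1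
    have h1' : t α * L < -ε := by exact_mod_cast h1
    have htα := htpos α
    have h2' : t α * (-r) < ε := (lt_div_iff₀ (by linarith)).mp h2
    have : L < r := by nlinarith
    exact_mod_cast this.le
  -- Now deduce weak convergence via integrals of bounded continuous functions.
  refine ProbabilityMeasure.tendsto_iff_forall_integral_tendsto.mpr ?_
  intro f
  suffices hmain : Tendsto (fun i => ∫ ω, f ω ∂((ν i : Measure K))) atTop (𝓝 (f x₀)) by
    convert hmain using 2
    exact integral_dirac _ _
  rw [Metric.tendsto_nhds]
  intro ε hε
  have hε2 : 0 < ε / 2 := by positivity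
  set F : Set K := {x : K | ε / 2 ≤ |f x - f x₀|} with hFdef
  have hFclosed : IsClosed F :=
    isClosed_le continuous_const ((f.continuous.sub continuous_const).abs)
  have hx₀F : x₀ ∉ F := by
    simp only [hFdef, Set.mem_setOf_eq, sub_self, abs_zero, not_le]
    exact hε2
  have hmeas := key F hFclosed hx₀F
  have hto : Tendsto (fun α => ((ν α : Measure K) F).toReal) atTop (𝓝 0) := by
    have := (ENNReal.tendsto_toReal (by simp : (0:ℝ≥0∞) ≠ ⊤)).comp hmeas
    simpa [Function.comp_def] using this
  set M : ℝ := 2 * ‖f‖ + 1 with hM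
  have hMpos : 0 < M := by positivity
  have hev2 : ∀ᶠ α in atTop, M * ((ν α : Measure K) F).toReal < ε / 2 := by
    have := hto.const_mul M
    rw [mul_zero] at this
    exact this.eventually_lt_const hε2
  filter_upwards [hev2] with α hα
  rw [Real.dist_eq]
  have hFm : MeasurableSet F := hFclosed.measurableSet
  have hint_f : Integrable (fun x => f x) ((ν α : Measure K)) := f.integrable _
  have hint_g : Integrable (fun x => f x - f x₀) ((ν α : Measure K)) :=
    hint_f.sub (integrable_const _)
  have hint_rhs : Integrable
      (fun x => ε / 2 + F.indicator (fun _ => M) x) ((ν α : Measure K)) :=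
    (integrable_const _).add ((integrable_const M).indicator hFm)
  have hsub : ∫ x, f x ∂(ν α : Measure K) - f x₀
      = ∫ x, (f x - f x₀) ∂(ν α : Measure K) := by
    rw [integral_sub hint_f (integrable_const _), integral_const]
    simp
  rw [hsub]
  have habs : |∫ x, (f x - f x₀) ∂(ν α : Measure K)|
      ≤ ∫ x, |f x - f x₀| ∂(ν α : Measure K) := by
    simpa [Real.norm_eq_abs] using
      norm_integral_le_integral_norm (μ := (ν α : Measure K)) (fun x => f x - f x₀)
  have hptwise : ∀ x, |f x - f x₀| ≤ ε / 2 + F.indicator (fun _ => M) x := by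
    intro x
    by_cases hxF : x ∈ F
    · have : |f x - f x₀| ≤ M := by
        have h1 := f.norm_coe_le_norm x
        have h2 := f.norm_coe_le_norm x₀
        rw [hM]
        calc |f x - f x₀| ≤ |f x| + |f x₀| := abs_sub _ _
          _ ≤ ‖f‖ + ‖f‖ := by
              rw [← Real.norm_eq_abs, ← Real.norm_eq_abs]
              exact add_le_add h1 h2
          _ ≤ 2 * ‖f‖ + 1 := by linarith
      rw [Set.indicator_of_mem hxF]
      linarith
    · have : ¬ (ε / 2 ≤ |f x - f x₀|) := hxF
      push_neg at this
      rw [Set.indicator_of_notMem hxF]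
      linarith
  have hintle : ∫ x, |f x - f x₀| ∂(ν α : Measure K)
      ≤ ∫ x, (ε / 2 + F.indicator (fun _ => M) x) ∂(ν α : Measure K) :=
    integral_mono hint_g.abs hint_rhs hptwise
  have hrhs : ∫ x, (ε / 2 + F.indicator (fun _ => M) x) ∂(ν α : Measure K)
      = ε / 2 + M * ((ν α : Measure K) F).toReal := by
    rw [integral_add (integrable_const _) ((integrable_const M).indicator hFm),
      integral_const, integral_indicator_const M hFm]
    simp [mul_comm, smul_eq_mul]
    exact Or.inl rfl
  rw [hrhs] at hintle
  calc |∫ x, (f x - f x₀) ∂(ν α : Measure K)|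
      ≤ ε / 2 + M * ((ν α : Measure K) F).toReal := le_trans habs hintle
    _ < ε / 2 + ε / 2 := by linarith
    _ = ε := by ring
end

section
/- Let X be a real Hausdorff topological vector space, let K ⊆ X be a compact convex metrizable subset with the subspace topology, let (ν_α)_{α∈A} be a net of Borel probability measures on K and (t_α)_{α∈A} a net of positive reals converging to 0, and suppose (ν_α) satisfies the large deviation principle on K with powers (t_α) and rate function I. Suppose there is a convex set M ⊆ K such that I = +∞ on K∖M and I is finite and affine on M, and let φ : X → ℝ be a continuous linear map. Then for every μ ∈ M there exists ε₀ > 0 such that for all ε with 0 < ε < ε₀, writing G_ε = { x ∈ K : |φ(x) − φ(μ)| > ε }, the limits lim_α t_α log ν_α(G_ε) and lim_α t_α log ν_α(cl_K(G_ε)) exist in [−∞,0] and lim_α t_α log ν_α(G_ε) = lim_α t_α log ν_α(cl_K(G_ε)) = −inf_{x∈G_ε} I(x) = −inf_{x∈cl_K(G_ε)} I(x) (these common values being −∞ when the infima are +∞). -/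
open MeasureTheory Filter Topology
open scoped ENNReal

/-- The large deviation principle on a subset `K` of `X` (with its subspace topology):
the rate function is `[0,+∞]`-valued and lower semicontinuous on `K`, and relatively
closed and relatively open subsets of `K` are used in the bounds. -/
def HasLDPOn {X A : Type*} [TopologicalSpace X] [MeasurableSpace X] [Preorder A]
    (ν : A → Measure X) (t : A → ℝ) (K : Set X) (I : X → EReal) : Prop :=
  (∀ x ∈ K, 0 ≤ I x) ∧ LowerSemicontinuousOn I K ∧
    (∀ F : Set X, F ⊆ K → (∃ F' : Set X, IsClosed F' ∧ F = F' ∩ K) →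
      Filter.limsup (fun α => (t α : EReal) * ENNReal.log (ν α F)) Filter.atTop
        ≤ -(⨅ x ∈ F, I x)) ∧
    (∀ G : Set X, G ⊆ K → (∃ U : Set X, IsOpen U ∧ G = U ∩ K) →
      -(⨅ x ∈ G, I x) ≤
        Filter.liminf (fun α => (t α : EReal) * ENNReal.log (ν α G)) Filter.atTop)

set_option maxHeartbeats 1000000 in
/-- Let `K` be a compact convex metrizable subset of a real Hausdorff topological vector
space, let the net `ν` of Borel probability measures on `K` satisfy the large deviation
principle with powers `t` and affine rate function `I` (equal to `+∞` off a convex set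
`M ⊆ K`, finite and affine on `M`), and let `φ : X → ℝ` be continuous linear. Then for
every `μ ∈ M` and all sufficiently small `ε > 0`, with
`G_ε = { x ∈ K : |φ(x) − φ(μ)| > ε }`, the limits of `t_α log ν_α(G_ε)` and
`t_α log ν_α(cl_K G_ε)` exist in `[−∞,0]` and both equal
`−inf_{G_ε} I = −inf_{cl_K G_ε} I`. -/
theorem ldp_limit_on_evaluation_annuli
    {X : Type*} [AddCommGroup X] [Module ℝ X] [TopologicalSpace X]
    [IsTopologicalAddGroup X] [ContinuousSMul ℝ X] [T2Space X]
    [MeasurableSpace X] [BorelSpace X]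
    {A : Type*} [Preorder A] [IsDirected A (· ≤ ·)] [Nonempty A]
    (K : Set X) (hKcomp : IsCompact K) (hKconv : Convex ℝ K)
    (hKmetr : TopologicalSpace.MetrizableSpace K)
    (ν : A → Measure X) (hprob : ∀ α, IsProbabilityMeasure (ν α))
    (hsupp : ∀ α, ν α K = 1)
    (t : A → ℝ) (htpos : ∀ α, 0 < t α) (htlim : Tendsto t atTop (𝓝 0))
    (I : X → EReal) (hLDP : HasLDPOn ν t K I)
    (M : Set X) (hMK : M ⊆ K) (hM : Convex ℝ M)
    (hItop : ∀ x ∈ K \ M, I x = ⊤)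
    (hIfin : ∀ x ∈ M, I x ≠ ⊤)
    (hIaff : ∀ x ∈ M, ∀ y ∈ M, ∀ β : ℝ, 0 ≤ β → β ≤ 1 →
      I (β • x + (1 - β) • y) = (β : EReal) * I x + ((1 - β : ℝ) : EReal) * I y)
    (φ : X →L[ℝ] ℝ)
    (μ : X) (hμ : μ ∈ M) :
    ∃ ε₀ > (0 : ℝ), ∀ ε : ℝ, 0 < ε → ε < ε₀ →
      ∃ l : EReal, l ≤ 0 ∧
        Tendsto (fun α => (t α : EReal) *
            ENNReal.log (ν α {x ∈ K | ε < |φ x - φ μ|})) atTop (𝓝 l) ∧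
        Tendsto (fun α => (t α : EReal) *
            ENNReal.log (ν α (closure {x ∈ K | ε < |φ x - φ μ|} ∩ K))) atTop (𝓝 l) ∧
        l = -(⨅ x ∈ {x ∈ K | ε < |φ x - φ μ|}, I x) ∧
        l = -(⨅ x ∈ closure {x ∈ K | ε < |φ x - φ μ|} ∩ K, I x) := by
  obtain ⟨hpos, hlsc, hupper, hlower⟩ := hLDP
  set D : Set ℝ := (fun y => φ y - φ μ) '' M with hDdef
  have hDne : D.Nonempty := ⟨φ μ - φ μ, μ, hμ, rfl⟩
  have hKim : IsCompact ((fun y => φ y - φ μ) '' K) :=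
    hKcomp.image (φ.continuous.sub continuous_const)
  have hDsub : D ⊆ (fun y => φ y - φ μ) '' K := Set.image_mono hMK
  have hDbddA : BddAbove D := hKim.bddAbove.mono hDsub
  have hDbddB : BddBelow D := hKim.bddBelow.mono hDsub
  set ε₀ : ℝ := min (if 0 < sSup D then sSup D else 1)
      (if 0 < -(sInf D) then -(sInf D) else 1) with hε₀def
  have hε₀pos : 0 < ε₀ := by
    apply lt_min <;> split <;> first | assumption | norm_num
  refine ⟨ε₀, hε₀pos, ?_⟩
  intro ε hε hεε₀
  -- key sign lemmas
  have hplus : ∀ x ∈ M, ε ≤ φ x - φ μ → ∃ y ∈ M, ε < φ y - φ μ := by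
    intro x hxM hxε
    have hmem : φ x - φ μ ∈ D := ⟨x, hxM, rfl⟩
    have hs : ε ≤ sSup D := le_trans hxε (le_csSup hDbddA hmem)
    have hspos : 0 < sSup D := lt_of_lt_of_le hε hs
    have : ε < sSup D := by
      refine lt_of_lt_of_le hεε₀ ?_
      calc ε₀ ≤ _ := min_le_left _ _
        _ = sSup D := if_pos hspos
    obtain ⟨d, hdD, hd⟩ := exists_lt_of_lt_csSup hDne this
    obtain ⟨y, hyM, rfl⟩ := hdD
    exact ⟨y, hyM, hd⟩
  have hminus : ∀ x ∈ M, ε ≤ φ μ - φ x → ∃ y ∈ M, ε < φ μ - φ y := by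
    intro x hxM hxε
    have hmem : φ x - φ μ ∈ D := ⟨x, hxM, rfl⟩
    have hs : sInf D ≤ -ε := le_trans (csInf_le hDbddB hmem) (by linarith)
    have hspos : 0 < -(sInf D) := by linarith
    have : sInf D < -ε := by
      have h1 : ε₀ ≤ -(sInf D) := by
        calc ε₀ ≤ _ := min_le_right _ _
          _ = -(sInf D) := if_pos hspos
      linarith
    obtain ⟨d, hdD, hd⟩ := exists_lt_of_csInf_lt hDne this
    obtain ⟨y, hyM, rfl⟩ := hdD
    change φ y - φ μ < -ε at hd
    exact ⟨y, hyM, by linarith⟩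
  set G : Set X := {x ∈ K | ε < |φ x - φ μ|} with hGdef
  set Fc : Set X := closure G ∩ K with hFcdef
  have hGK : G ⊆ K := fun x hx => hx.1
  have hGF : G ⊆ Fc := fun x hx => ⟨subset_closure hx, hx.1⟩
  have hcontabs : Continuous fun z => |φ z - φ μ| :=
    (φ.continuous.sub continuous_const).abs
  have hclosed : IsClosed {z : X | ε ≤ |φ z - φ μ|} :=
    isClosed_le continuous_const hcontabs
  have hcl : closure G ⊆ {z : X | ε ≤ |φ z - φ μ|} :=
    closure_minimal (fun x hx => le_of_lt hx.2) hclosed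
  set m : EReal := ⨅ x ∈ Fc, I x with hmdef
  have hm0 : (0 : EReal) ≤ m := le_iInf₂ fun x hx => hpos x hx.2
  -- equality of the two infima
  have infeq : (⨅ x ∈ G, I x) = m := by
    refine le_antisymm (le_iInf₂ ?_) (biInf_mono hGF)
    intro x hx
    obtain ⟨hxcl, hxK⟩ := hx
    by_cases hIx : I x = ⊤
    · simp [hIx]
    have hxM : x ∈ M := by
      by_contra h
      exact hIx (hItop x ⟨hxK, h⟩)
    have hxe : ε ≤ |φ x - φ μ| := hcl hxcl
    by_cases hgt : ε < |φ x - φ μ|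
    · exact iInf₂_le x ⟨hxK, hgt⟩
    have heq : |φ x - φ μ| = ε := le_antisymm (not_lt.1 hgt) hxe
    -- find a witness y ∈ M further out, on the correct side
    have hwit : ∃ y ∈ M, ∀ β ∈ Set.Ioo (0:ℝ) 1,
        ε < |φ (β • y + (1 - β) • x) - φ μ| := by
      rcases (abs_eq hε.le).1 heq with hsign | hsign
      · obtain ⟨y, hyM, hy⟩ := hplus x hxM (le_of_eq hsign.symm)
        refine ⟨y, hyM, fun β hβ => ?_⟩
        have hval : φ (β • y + (1 - β) • x) - φ μ
            = β * (φ y - φ μ) + (1 - β) * (φ x - φ μ) := by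
          simp only [map_add, ContinuousLinearMap.map_smul, smul_eq_mul]; ring
        have : ε < φ (β • y + (1 - β) • x) - φ μ := by
          rw [hval, hsign]; nlinarith [hβ.1, hβ.2, hy]
        exact this.trans_le (le_abs_self _)
      · obtain ⟨y, hyM, hy⟩ := hminus x hxM (by linarith)
        refine ⟨y, hyM, fun β hβ => ?_⟩
        have hval : φ (β • y + (1 - β) • x) - φ μ
            = β * (φ y - φ μ) + (1 - β) * (φ x - φ μ) := by
          simp only [map_add, ContinuousLinearMap.map_smul, smul_eq_mul]; ring
        have : φ (β • y + (1 - β) • x) - φ μ < -ε := by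
          rw [hval, hsign]; nlinarith [hβ.1, hβ.2, hy]
        calc ε < -(φ (β • y + (1 - β) • x) - φ μ) := by linarith
          _ ≤ |φ (β • y + (1 - β) • x) - φ μ| := neg_le_abs _
    obtain ⟨y, hyM, habs⟩ := hwit
    have hIxbot : I x ≠ ⊥ := fun h => by simpa [h] using hpos x hxK
    have hIybot : I y ≠ ⊥ := fun h => by simpa [h] using hpos y (hMK hyM)
    set a : ℝ := (I x).toReal with hadef
    set b : ℝ := (I y).toReal with hbdef
    have hax : ((a : EReal)) = I x := EReal.coe_toReal hIx hIxbot
    have hby : ((b : EReal)) = I y := EReal.coe_toReal (hIfin y hyM) hIybot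
    have hle : ∀ β ∈ Set.Ioo (0:ℝ) 1,
        (⨅ x ∈ G, I x) ≤ ((β * b + (1 - β) * a : ℝ) : EReal) := by
      intro β hβ
      have hzK : β • y + (1 - β) • x ∈ K :=
        hKconv (hMK hyM) hxK hβ.1.le (by linarith [hβ.2]) (by ring)
      have hzG : β • y + (1 - β) • x ∈ G := ⟨hzK, habs β hβ⟩
      calc (⨅ x ∈ G, I x) ≤ I (β • y + (1 - β) • x) := iInf₂_le _ hzG
        _ = (β : EReal) * I y + ((1 - β : ℝ) : EReal) * I x :=
            hIaff y hyM x hxM β hβ.1.le hβ.2.le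
        _ = ((β * b + (1 - β) * a : ℝ) : EReal) := by
            rw [← hax, ← hby]; norm_cast
    have htend : Tendsto (fun β : ℝ => ((β * b + (1 - β) * a : ℝ) : EReal))
        (𝓝[>] (0:ℝ)) (𝓝 ((a : EReal))) := by
      have h1 : Tendsto (fun β : ℝ => β * b + (1 - β) * a) (𝓝 0) (𝓝 a) := by
        have hc : Continuous fun β : ℝ => β * b + (1 - β) * a := by continuity
        have := hc.tendsto 0
        simpa using this
      exact (continuous_coe_real_ereal.tendsto a).comp (h1.mono_left nhdsWithin_le_nhds)
    have hfin : (⨅ x ∈ G, I x) ≤ (a : EReal) := by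
      refine ge_of_tendsto htend ?_
      filter_upwards [Ioo_mem_nhdsGT_of_mem (Set.left_mem_Ico.2 one_pos)] with β hβ
      exact hle β hβ
    rwa [hax] at hfin
  -- the LDP bounds
  have hUpper := hupper Fc Set.inter_subset_right ⟨closure G, isClosed_closure, rfl⟩
  have hLower := hlower G hGK ⟨{x | ε < |φ x - φ μ|},
    isOpen_lt continuous_const hcontabs, by ext x; exact ⟨fun h => ⟨h.2, h.1⟩, fun h => ⟨h.2, h.1⟩⟩⟩
  set f : A → EReal := fun α => (t α : EReal) * ENNReal.log (ν α G) with hfdef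
  set g : A → EReal := fun α => (t α : EReal) * ENNReal.log (ν α Fc) with hgdef
  have hfg : ∀ α, f α ≤ g α := by
    intro α
    apply mul_le_mul_of_nonneg_left (ENNReal.log_monotone (measure_mono hGF))
    exact_mod_cast (htpos α).le
  have hup_f : limsup f atTop ≤ -m :=
    le_trans (limsup_le_limsup (Eventually.of_forall hfg)) hUpper
  have hlo_f : -m ≤ liminf f atTop := by rw [← infeq]; exact hLower
  have hlo_g : -m ≤ liminf g atTop :=
    le_trans hlo_f (liminf_le_liminf (Eventually.of_forall hfg))
  have hflim : liminf f atTop = -m ∧ limsup f atTop = -m := by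
    constructor
    · exact le_antisymm (le_trans liminf_le_limsup hup_f) hlo_f
    · exact le_antisymm hup_f (le_trans hlo_f liminf_le_limsup)
  have hglim : liminf g atTop = -m ∧ limsup g atTop = -m := by
    have hup_g : limsup g atTop ≤ -m := hUpper
    constructor
    · exact le_antisymm (le_trans liminf_le_limsup hup_g) hlo_g
    · exact le_antisymm hup_g (le_trans hlo_g liminf_le_limsup)
  refine ⟨-m, ?_, ?_, ?_, by rw [infeq], rfl⟩
  · rw [show (0 : EReal) = -0 by simp]
    exact EReal.neg_le_neg_iff.2 hm0
  · exact tendsto_of_liminf_eq_limsup hflim.1 hflim.2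
  · exact tendsto_of_liminf_eq_limsup hglim.1 hglim.2
end
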